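/- arXiv:2309.13597 — 5 statements merged into one kernel-verified Lean document; each statement's English description precedes it below -/
import Mathlib

section
/- Let I(α) = ∫₀^∞ ((ξ+1)^(α−1) − ξ^(α−1))² dξ. Then for all 0 ≤ r ≤ t ≤ T, ∫₀^T | k₂(ξ−t)·1_{ξ>t} − k₂(ξ−r)·1_{ξ>r} |² dξ ≤ (1/Γ(α)²) · (1/(2α−1) + I(α)) · (t−r)^(2α−1). -/
open MeasureTheory

open Set Real

lemma diff_nonneg' {α : ℝ} (hα2 : α < 1) {u : ℝ} (hu : 0 < u) :
    0 ≤ u ^ (α - 1) - (u + 1) ^ (α - 1) :=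
  sub_nonneg.2 (Real.rpow_le_rpow_of_nonpos hu (by linarith) (by linarith))

lemma tail_bound {α : ℝ} (hα1 : 1 / 2 < α) (hα2 : α < 1) {u : ℝ} (hu : 0 < u) :
    u ^ (α - 1) - (u + 1) ^ (α - 1) ≤ (1 - α) * u ^ (α - 2) := by
  have hx : (0:ℝ) < 1 / u := by positivity
  have hb : (1 + 1/u) ^ (1 - α) ≤ 1 + (1 - α) * (1/u) :=
    rpow_one_add_le_one_add_mul_self (by linarith) (by linarith) (by linarith)
  have h1u : (0:ℝ) < 1 + 1/u := by linarith
  have h2 : (0:ℝ) < 1 + (1 - α) * (1/u) := by nlinarith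
  have hsplit : (u + 1) ^ (α - 1) = u ^ (α - 1) * (1 + 1/u) ^ (α - 1) := by
    rw [← Real.mul_rpow hu.le h1u.le]
    congr 1
    field_simp
  have hpow : (1 + 1/u) ^ (α - 1) = ((1 + 1/u) ^ (1 - α))⁻¹ := by
    rw [← Real.rpow_neg h1u.le]
    ring_nf
  have hinv : (1 + (1 - α) * (1/u))⁻¹ ≤ (1 + 1/u) ^ (α - 1) := by
    rw [hpow]
    exact inv_anti₀ (Real.rpow_pos_of_pos h1u _) hb |>.trans_eq rfl
  have hupos : (0:ℝ) ≤ u ^ (α - 1) := Real.rpow_nonneg hu.le _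
  have key : u ^ (α - 1) - (u + 1) ^ (α - 1)
      ≤ u ^ (α - 1) * (1 - (1 + (1 - α) * (1/u))⁻¹) := by
    rw [hsplit]
    nlinarith [mul_le_mul_of_nonneg_left hinv hupos]
  have hfrac : 1 - (1 + (1 - α) * (1/u))⁻¹ ≤ (1 - α) * (1/u) := by
    have hc : (0:ℝ) ≤ (1 - α) * (1/u) := mul_nonneg (by linarith) hx.le
    have h3 : (1 + (1 - α) * (1/u)) * (1 + (1 - α) * (1/u))⁻¹ = 1 := mul_inv_cancel₀ h2.ne'
    nlinarith [inv_nonneg.2 h2.le, hc, h3]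
  have hmul : u ^ (α - 1) * (1/u) = u ^ (α - 2) := by
    rw [one_div, ← Real.rpow_neg_one u, ← Real.rpow_add hu]
    ring_nf
  calc u ^ (α - 1) - (u + 1) ^ (α - 1)
      ≤ u ^ (α - 1) * ((1 - α) * (1/u)) := key.trans (mul_le_mul_of_nonneg_left hfrac hupos)
    _ = (1 - α) * u ^ (α - 2) := by rw [← hmul]; ring

lemma sq_rpow' {x : ℝ} (hx : 0 ≤ x) (p : ℝ) : (x ^ p) ^ 2 = x ^ (2 * p) := by
  rw [show (2:ℝ) * p = p * 2 by ring, Real.rpow_mul hx, Real.rpow_two]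

lemma g_integrable {α : ℝ} (hα1 : 1 / 2 < α) (hα2 : α < 1) :
    IntegrableOn (fun u : ℝ => ((u + 1) ^ (α - 1) - u ^ (α - 1)) ^ 2) (Set.Ioi 0) := by
  have hmeas : Measurable fun u : ℝ => ((u + 1) ^ (α - 1) - u ^ (α - 1)) ^ 2 := by fun_prop
  have h01 : IntegrableOn (fun u : ℝ => ((u + 1) ^ (α - 1) - u ^ (α - 1)) ^ 2) (Set.Ioc 0 1) := by
    have hdom : IntegrableOn (fun u : ℝ => u ^ (2 * α - 2)) (Set.Ioc (0:ℝ) 1) :=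
      (intervalIntegrable_iff_integrableOn_Ioc_of_le zero_le_one).1
        (intervalIntegral.intervalIntegrable_rpow' (by linarith))
    refine hdom.mono' hmeas.aestronglyMeasurable ?_
    filter_upwards [ae_restrict_mem measurableSet_Ioc] with u hu
    obtain ⟨hu0, _⟩ := hu
    have h1 : 0 ≤ u ^ (α - 1) - (u + 1) ^ (α - 1) := diff_nonneg' hα2 hu0
    have h2 : u ^ (α - 1) - (u + 1) ^ (α - 1) ≤ u ^ (α - 1) :=
      sub_le_self _ (Real.rpow_nonneg (by linarith) _)
    rw [Real.norm_eq_abs, abs_of_nonneg (sq_nonneg _),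
      show ((u + 1) ^ (α - 1) - u ^ (α - 1)) ^ 2 = (u ^ (α - 1) - (u + 1) ^ (α - 1)) ^ 2 by ring]
    calc (u ^ (α - 1) - (u + 1) ^ (α - 1)) ^ 2 ≤ (u ^ (α - 1)) ^ 2 := pow_le_pow_left₀ h1 h2 2
      _ = u ^ (2 * α - 2) := by rw [sq_rpow' hu0.le]; ring_nf
  have h1i : IntegrableOn (fun u : ℝ => ((u + 1) ^ (α - 1) - u ^ (α - 1)) ^ 2) (Set.Ioi 1) := by
    have hdom : IntegrableOn (fun u : ℝ => u ^ (2 * α - 4)) (Set.Ioi (1:ℝ)) :=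
      integrableOn_Ioi_rpow_of_lt (by linarith) one_pos
    refine hdom.mono' hmeas.aestronglyMeasurable ?_
    filter_upwards [ae_restrict_mem measurableSet_Ioi] with u hu
    have hu0 : (0:ℝ) < u := lt_trans one_pos hu
    have h1 : 0 ≤ u ^ (α - 1) - (u + 1) ^ (α - 1) := diff_nonneg' hα2 hu0
    have h2 : u ^ (α - 1) - (u + 1) ^ (α - 1) ≤ u ^ (α - 2) := by
      have := tail_bound hα1 hα2 hu0
      nlinarith [Real.rpow_nonneg hu0.le (α - 2)]
    rw [Real.norm_eq_abs, abs_of_nonneg (sq_nonneg _),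
      show ((u + 1) ^ (α - 1) - u ^ (α - 1)) ^ 2 = (u ^ (α - 1) - (u + 1) ^ (α - 1)) ^ 2 by ring]
    calc (u ^ (α - 1) - (u + 1) ^ (α - 1)) ^ 2 ≤ (u ^ (α - 2)) ^ 2 := pow_le_pow_left₀ h1 h2 2
      _ = u ^ (2 * α - 4) := by rw [sq_rpow' hu0.le]; ring_nf
  rw [show Set.Ioi (0:ℝ) = Set.Ioc 0 1 ∪ Set.Ioi 1 from (Set.Ioc_union_Ioi_eq_Ioi zero_le_one).symm]
  exact h01.union h1i

open intervalIntegral in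
lemma my_integral_rpow {a b r : ℝ} (h : -1 < r ∨ r ≠ -1 ∧ (0:ℝ) ∉ Set.uIcc a b) :
    ∫ x in a..b, x ^ r = (b ^ (r + 1) - a ^ (r + 1)) / (r + 1) :=
  integral_rpow h

/-- With `I(α) = ∫₀^∞ ((ξ+1)^(α−1) − ξ^(α−1))² dξ` and
`k₂(u) = u^(α−1)/Γ(α)`, for all `0 ≤ r ≤ t ≤ T`,
`∫₀^T |k₂(ξ−t)1_{ξ>t} − k₂(ξ−r)1_{ξ>r}|² dξ ≤ (1/Γ(α)²)(1/(2α−1) + I(α))(t−r)^(2α−1)`. -/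
theorem statement2 (T α : ℝ) (hT : 0 < T) (hα1 : 1 / 2 < α) (hα2 : α < 1) :
    ∀ r t : ℝ, 0 ≤ r → r ≤ t → t ≤ T →
      (∫ ξ in Set.Ioo (0 : ℝ) T,
          ((if t < ξ then (ξ - t) ^ (α - 1) / Real.Gamma α else 0) -
            (if r < ξ then (ξ - r) ^ (α - 1) / Real.Gamma α else 0)) ^ 2) ≤
        (1 / Real.Gamma α ^ 2) *
          (1 / (2 * α - 1) +
            ∫ ξ in Set.Ioi (0 : ℝ), ((ξ + 1) ^ (α - 1) - ξ ^ (α - 1)) ^ 2) *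
          (t - r) ^ (2 * α - 1) := by
  intro r t hr hrt htT
  have hΓ : 0 < Real.Gamma α := Real.Gamma_pos_of_pos (by linarith)
  have h2α : (0:ℝ) < 2 * α - 1 := by linarith
  rcases eq_or_lt_of_le hrt with rfl | hrt'
  · simp [sub_self, Real.zero_rpow (ne_of_gt h2α)]
  · set I : ℝ := ∫ ξ in Set.Ioi (0:ℝ), ((ξ + 1) ^ (α - 1) - ξ ^ (α - 1)) ^ 2 with hIdef
    set δ := t - r with hδdef
    have hδ : 0 < δ := sub_pos.2 hrt'
    set F : ℝ → ℝ := fun ξ =>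
      ((if t < ξ then (ξ - t) ^ (α - 1) / Real.Gamma α else 0) -
        (if r < ξ then (ξ - r) ^ (α - 1) / Real.Gamma α else 0)) ^ 2 with hF
    have hFnn : ∀ ξ, 0 ≤ F ξ := fun ξ => sq_nonneg _
    -- piece (0, r]
    have hF0 : ∀ ξ ∈ Set.Ioc (0:ℝ) r, F ξ = 0 := by
      intro ξ hξ
      simp only [hF]
      rw [if_neg (not_lt.2 (hξ.2.trans hrt)), if_neg (not_lt.2 hξ.2)]
      simp
    have hInt0r : IntegrableOn F (Set.Ioc 0 r) := by
      exact (integrableOn_zero).congr_fun (fun ξ hξ => (hF0 ξ hξ).symm) measurableSet_Ioc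
    have hInt0rval : ∫ ξ in Set.Ioc (0:ℝ) r, F ξ = 0 := by
      rw [setIntegral_congr_fun measurableSet_Ioc hF0, integral_zero]
    -- piece (r, t]
    have hmid_eq : ∀ ξ ∈ Set.Ioc r t, F ξ = (ξ - r) ^ (2*α - 2) / Real.Gamma α ^ 2 := by
      intro ξ hξ
      simp only [hF]
      rw [if_neg (not_lt.2 hξ.2), if_pos hξ.1, zero_sub, neg_sq, div_pow,
        sq_rpow' (sub_pos.2 hξ.1).le]
      ring_nf
    have hmidint : IntegrableOn (fun ξ : ℝ => (ξ - r) ^ (2*α-2) / Real.Gamma α ^ 2)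
        (Set.Ioc r t) := by
      apply Integrable.div_const
      have h1 : IntervalIntegrable (fun x : ℝ => x ^ (2*α-2)) volume 0 (t - r) :=
        intervalIntegral.intervalIntegrable_rpow' (by linarith)
      have h2 := h1.comp_sub_right r
      rw [zero_add, sub_add_cancel] at h2
      exact (intervalIntegrable_iff_integrableOn_Ioc_of_le hrt).1 h2
    have hIntmid : IntegrableOn F (Set.Ioc r t) :=
      hmidint.congr_fun (fun ξ h => (hmid_eq ξ h).symm) measurableSet_Ioc
    have hmidval : ∫ ξ in Set.Ioc r t, F ξ = δ ^ (2*α-1) / (2*α-1) / Real.Gamma α ^ 2 := by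
      rw [setIntegral_congr_fun measurableSet_Ioc hmid_eq, integral_div]
      congr 1
      rw [← _root_.intervalIntegral.integral_of_le hrt,
        _root_.intervalIntegral.integral_comp_sub_right (fun x => x ^ (2*α-2)) r, sub_self,
        my_integral_rpow (Or.inl (by linarith : (-1:ℝ) < 2*α-2)),
        Real.zero_rpow (show (2*α-2+1 : ℝ) ≠ 0 by intro h; nlinarith),
        show (2*α-2+1 : ℝ) = 2*α-1 by ring, sub_zero, hδdef]
    -- piece (t, ∞)
    set G : ℝ → ℝ := fun ξ => ((ξ - t) ^ (α-1) - (ξ - r) ^ (α-1)) ^ 2 with hG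
    have htail_eqF : ∀ ξ ∈ Set.Ioi t, F ξ = G ξ / Real.Gamma α ^ 2 := by
      intro ξ hξ
      simp only [hF, hG]
      rw [if_pos (Set.mem_Ioi.1 hξ), if_pos (hrt'.trans (Set.mem_Ioi.1 hξ)), div_sub_div_same,
        div_pow]
    have himg : (fun u : ℝ => δ * u + t) '' Set.Ioi 0 = Set.Ioi t := by
      ext x
      simp only [Set.mem_image, Set.mem_Ioi]
      constructor
      · rintro ⟨u, hu, rfl⟩; nlinarith
      · intro hx
        exact ⟨(x - t)/δ, div_pos (sub_pos.2 hx) hδ, by field_simp; ring⟩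
    have hderiv : ∀ u ∈ Set.Ioi (0:ℝ),
        HasDerivWithinAt (fun u : ℝ => δ * u + t) δ (Set.Ioi 0) u := by
      intro u _
      simpa using (((hasDerivAt_id u).const_mul δ).add_const t).hasDerivWithinAt
    have hinj : Set.InjOn (fun u : ℝ => δ * u + t) (Set.Ioi 0) := by
      intro a _ b _ h
      have h2 : δ * a = δ * b := by dsimp at h; linarith
      exact mul_left_cancel₀ hδ.ne' h2
    have hGcomp : ∀ u ∈ Set.Ioi (0:ℝ),
        |δ| • G (δ * u + t) = δ ^ (2*α-1) * ((u+1)^(α-1) - u^(α-1))^2 := by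
      intro u hu
      have hu0 : (0:ℝ) < u := hu
      rw [hG]
      simp only
      rw [show δ * u + t - t = δ * u by ring, show δ * u + t - r = δ * (u + 1) by rw [hδdef]; ring,
        Real.mul_rpow hδ.le hu0.le, Real.mul_rpow hδ.le (by linarith : (0:ℝ) ≤ u + 1),
        smul_eq_mul, abs_of_pos hδ]
      have hpow : δ ^ (2*α-1) = δ * (δ^(α-1))^2 := by
        rw [sq_rpow' hδ.le, show (2*α - 1 : ℝ) = 1 + 2*(α - 1) by ring, Real.rpow_add hδ,
          Real.rpow_one]
      rw [hpow]; ring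
    have hchange := integral_image_eq_integral_abs_deriv_smul measurableSet_Ioi hderiv hinj G
    rw [himg] at hchange
    have htailval : ∫ ξ in Set.Ioi t, G ξ = δ^(2*α-1) * I := by
      rw [hchange, setIntegral_congr_fun measurableSet_Ioi hGcomp,
        MeasureTheory.integral_const_mul, hIdef]
    have hIntG : IntegrableOn G (Set.Ioi t) := by
      have hiff := integrableOn_image_iff_integrableOn_abs_deriv_smul measurableSet_Ioi hderiv hinj G
      rw [himg] at hiff
      refine hiff.2 ?_
      have hci : IntegrableOn (fun u : ℝ => δ^(2*α-1) * ((u+1)^(α-1) - u^(α-1))^2)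
          (Set.Ioi 0) := (g_integrable hα1 hα2).const_mul (δ^(2*α-1))
      exact hci.congr_fun (fun u hu => (hGcomp u hu).symm) measurableSet_Ioi
    have hInttail : IntegrableOn F (Set.Ioi t) := by
      have hdi : IntegrableOn (fun ξ => G ξ / Real.Gamma α ^ 2) (Set.Ioi t) :=
        hIntG.div_const _
      exact hdi.congr_fun (fun ξ h => (htail_eqF ξ h).symm) measurableSet_Ioi
    have htailFval : ∫ ξ in Set.Ioi t, F ξ = δ^(2*α-1) * I / Real.Gamma α ^ 2 := by
      rw [setIntegral_congr_fun measurableSet_Ioi htail_eqF, integral_div, htailval]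
    -- assemble
    have hsplit1 : Set.Ioc (0:ℝ) t = Set.Ioc 0 r ∪ Set.Ioc r t :=
      (Set.Ioc_union_Ioc_eq_Ioc hr hrt).symm
    have hsplit2 : Set.Ioi (0:ℝ) = Set.Ioc 0 t ∪ Set.Ioi t :=
      (Set.Ioc_union_Ioi_eq_Ioi (by linarith)).symm
    have hIntIoc0t : IntegrableOn F (Set.Ioc 0 t) := by
      rw [hsplit1]; exact hInt0r.union hIntmid
    have hIntIoi0 : IntegrableOn F (Set.Ioi 0) := by
      rw [hsplit2]; exact hIntIoc0t.union hInttail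
    have hval : ∫ ξ in Set.Ioi (0:ℝ), F ξ =
        δ^(2*α-1)/(2*α-1)/Real.Gamma α^2 + δ^(2*α-1)*I/Real.Gamma α^2 := by
      rw [hsplit2, setIntegral_union (Set.Ioc_disjoint_Ioi le_rfl) measurableSet_Ioi
          hIntIoc0t hInttail, hsplit1,
        setIntegral_union (Set.Ioc_disjoint_Ioc_of_le le_rfl) measurableSet_Ioc
          hInt0r hIntmid, hInt0rval, hmidval, htailFval, zero_add]
    calc (∫ ξ in Set.Ioo (0:ℝ) T, F ξ) ≤ ∫ ξ in Set.Ioi (0:ℝ), F ξ :=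
          setIntegral_mono_set hIntIoi0 (Filter.Eventually.of_forall hFnn)
            (HasSubset.Subset.eventuallyLE Set.Ioo_subset_Ioi_self)
      _ = (1 / Real.Gamma α ^ 2) * (1 / (2 * α - 1) + I) * δ ^ (2 * α - 1) := by
          rw [hval]; field_simp
end

section
/- There exists a constant C_α > 0, depending only on α, namely C_α = (1/Γ(α)) · (1/(2α−1) + ∫₀^∞ ((ξ+1)^(α−1) − ξ^(α−1))² dξ)^(1/2), such that for all 0 ≤ r ≤ t ≤ T and all x ∈ ℝ^d, ‖σ(t)x − σ(r)x‖₂ ≤ C_α · |t−r|^(α−1/2) · |x|; in particular the map t ↦ σ(t) is (α−1/2)-Hölder continuous from [0,T] to the space of bounded linear operators ℒ(ℝ^d; H). -/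
open MeasureTheory

noncomputable section

/-- Lebesgue measure restricted to `(0,T)`. -/
abbrev fracMeas (T : ℝ) : Measure ℝ := volume.restrict (Set.Ioo 0 T)

/-- The Hilbert space `H = L²((0,T); ℝ^d)`. -/
abbrev HSp (d : ℕ) (T : ℝ) := Lp (EuclideanSpace ℝ (Fin d)) 2 (fracMeas T)

open Set intervalIntegral


lemma st3_diff_nonneg {α : ℝ} (hα2 : α < 1) {u δ : ℝ} (hu : 0 < u) (hδ : 0 ≤ δ) :
    0 ≤ u ^ (α - 1) - (u + δ) ^ (α - 1) :=
  sub_nonneg.2 (Real.rpow_le_rpow_of_nonpos hu (by linarith) (by linarith))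

lemma st3_diff_le {α : ℝ} (hα2 : α < 1) {u δ : ℝ} (hu : 0 < u) (hδ : 0 ≤ δ) :
    u ^ (α - 1) - (u + δ) ^ (α - 1) ≤ (1 - α) * δ * u ^ (α - 2) := by
  have h0 : (0 : ℝ) ∉ Set.uIcc u (u + δ) := by
    rw [Set.uIcc_of_le (by linarith)]
    intro h
    exact absurd (h.1) (by linarith)
  have key : ∫ s in u..(u + δ), s ^ (α - 2) =
      ((u + δ) ^ (α - 2 + 1) - u ^ (α - 2 + 1)) / (α - 2 + 1) :=
    integral_rpow (Or.inr ⟨by intro h; norm_num at h; linarith, h0⟩)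
  have h2 : α - 2 + 1 = α - 1 := by ring
  rw [h2] at key
  have hint : IntervalIntegrable (fun s : ℝ => s ^ (α - 2)) volume u (u + δ) :=
    intervalIntegrable_rpow (Or.inr h0)
  have hbound : ∫ s in u..(u + δ), s ^ (α - 2) ≤ ∫ _ in u..(u + δ), u ^ (α - 2) := by
    apply intervalIntegral.integral_mono_on (by linarith) hint intervalIntegrable_const
    intro s hs
    exact Real.rpow_le_rpow_of_nonpos hu hs.1 (by linarith)
  rw [intervalIntegral.integral_const, smul_eq_mul] at hbound
  have hα1' : α - 1 ≠ 0 := by intro h; linarith [sub_eq_zero.mp h]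
  have : u ^ (α - 1) - (u + δ) ^ (α - 1) = (1 - α) * ∫ s in u..(u + δ), s ^ (α - 2) := by
    rw [key]; field_simp; ring
  rw [this]
  have h1α : (0:ℝ) ≤ 1 - α := by linarith
  calc (1 - α) * ∫ s in u..(u + δ), s ^ (α - 2)
      ≤ (1 - α) * ((u + δ - u) * u ^ (α - 2)) := by
        apply mul_le_mul_of_nonneg_left _ h1α; simpa using hbound
    _ = (1 - α) * δ * u ^ (α - 2) := by ring

lemma st3_integrableOn_g {α : ℝ} (hα1 : 1 / 2 < α) (hα2 : α < 1) {δ : ℝ} (hδ : 0 < δ) :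
    IntegrableOn (fun u : ℝ => (u ^ (α - 1) - (u + δ) ^ (α - 1)) ^ 2) (Ioi 0) := by
  have hmeas : Measurable fun u : ℝ => (u ^ (α - 1) - (u + δ) ^ (α - 1)) ^ 2 := by
    fun_prop
  rw [← Ioc_union_Ioi_eq_Ioi hδ.le]
  refine IntegrableOn.union ?_ ?_
  · -- on (0, δ]
    have hmaj : IntegrableOn (fun u : ℝ => u ^ (2 * α - 2)) (Ioc 0 δ) := by
      rw [← intervalIntegrable_iff_integrableOn_Ioc_of_le hδ.le]
      exact intervalIntegrable_rpow' (by linarith)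
    refine Integrable.mono' hmaj hmeas.aestronglyMeasurable ?_
    filter_upwards [ae_restrict_mem measurableSet_Ioc] with u hu
    have hu0 : 0 < u := hu.1
    have h1 : 0 ≤ u ^ (α - 1) - (u + δ) ^ (α - 1) := st3_diff_nonneg hα2 hu0 hδ.le
    have h2 : u ^ (α - 1) - (u + δ) ^ (α - 1) ≤ u ^ (α - 1) := by
      have := Real.rpow_nonneg (by linarith : (0:ℝ) ≤ u + δ) (α - 1)
      linarith
    rw [Real.norm_eq_abs, abs_of_nonneg (sq_nonneg _)]
    calc (u ^ (α - 1) - (u + δ) ^ (α - 1)) ^ 2 ≤ (u ^ (α - 1)) ^ 2 := by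
          apply sq_le_sq' (by linarith [Real.rpow_nonneg hu0.le (α-1)]) h2
      _ = u ^ (2 * α - 2) := by
          rw [← Real.rpow_natCast (u ^ (α - 1)) 2, ← Real.rpow_mul hu0.le]
          congr 1; push_cast; ring
  · -- on (δ, ∞)
    have hmaj : IntegrableOn (fun u : ℝ => ((1 - α) * δ) ^ 2 * u ^ (2 * α - 4)) (Ioi δ) :=
      (integrableOn_Ioi_rpow_of_lt (by linarith) hδ).const_mul _
    refine Integrable.mono' hmaj hmeas.aestronglyMeasurable ?_
    filter_upwards [ae_restrict_mem measurableSet_Ioi] with u hu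
    have hu0 : 0 < u := hδ.trans hu
    have h1 : 0 ≤ u ^ (α - 1) - (u + δ) ^ (α - 1) := st3_diff_nonneg hα2 hu0 hδ.le
    have h2 : u ^ (α - 1) - (u + δ) ^ (α - 1) ≤ (1 - α) * δ * u ^ (α - 2) :=
      st3_diff_le hα2 hu0 hδ.le
    rw [Real.norm_eq_abs, abs_of_nonneg (sq_nonneg _)]
    have hb0 : 0 ≤ (1 - α) * δ * u ^ (α - 2) :=
      mul_nonneg (mul_nonneg (by linarith) hδ.le) (Real.rpow_nonneg hu0.le _)
    calc (u ^ (α - 1) - (u + δ) ^ (α - 1)) ^ 2 ≤ ((1 - α) * δ * u ^ (α - 2)) ^ 2 :=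
          sq_le_sq' (by linarith) h2
      _ = ((1 - α) * δ) ^ 2 * u ^ (2 * α - 4) := by
          rw [mul_pow, ← Real.rpow_natCast (u ^ (α - 2)) 2, ← Real.rpow_mul hu0.le]
          congr 1; push_cast; ring


lemma st3_key {α : ℝ} (hα1 : 1 / 2 < α) (hα2 : α < 1) {r t T : ℝ}
    (hr : 0 ≤ r) (hrt : r < t) (htT : t ≤ T) :
    ∫ ξ in Ioo 0 T,
        ((if t < ξ then (ξ - t) ^ (α - 1) else 0) - (if r < ξ then (ξ - r) ^ (α - 1) else 0)) ^ 2
      ≤ (t - r) ^ (2 * α - 1) *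
        (1 / (2 * α - 1) + ∫ ξ in Ioi (0 : ℝ), ((ξ + 1) ^ (α - 1) - ξ ^ (α - 1)) ^ 2) := by
  set δ := t - r with hδdef
  have hδ : 0 < δ := by rw [hδdef]; linarith
  set φ := fun ξ : ℝ =>
    (if t < ξ then (ξ - t) ^ (α - 1) else 0) - (if r < ξ then (ξ - r) ^ (α - 1) else 0) with hφ
  set I := ∫ ξ in Ioi (0 : ℝ), ((ξ + 1) ^ (α - 1) - ξ ^ (α - 1)) ^ 2 with hI
  set g := fun u : ℝ => (u ^ (α - 1) - (u + δ) ^ (α - 1)) ^ 2 with hg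
  have hgint : IntegrableOn g (Ioi 0) := st3_integrableOn_g hα1 hα2 hδ
  have e1 : EqOn (fun ξ => φ ξ ^ 2) (fun _ => (0:ℝ)) (Ioc 0 r) := by
    intro ξ hξ
    simp [hφ, not_lt.2 hξ.2, not_lt.2 (hξ.2.trans hrt.le)]
  have e2 : EqOn (fun ξ => φ ξ ^ 2) (fun ξ => (ξ - r) ^ (2 * α - 2)) (Ioc r t) := by
    intro ξ hξ
    have h1 : ¬ t < ξ := not_lt.2 hξ.2
    have h3 : (0:ℝ) < ξ - r := by have := hξ.1; linarith
    simp only [hφ, if_neg h1, if_pos hξ.1, zero_sub, neg_sq]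
    rw [← Real.rpow_natCast ((ξ - r) ^ (α - 1)) 2, ← Real.rpow_mul h3.le]
    congr 1; push_cast; ring
  have e3 : EqOn (fun ξ => φ ξ ^ 2) (fun ξ => g (ξ - t)) (Ioc t T) := by
    intro ξ hξ
    have h1 : t < ξ := hξ.1
    have h2 : r < ξ := hrt.trans h1
    simp only [hφ, if_pos h1, if_pos h2, hg]
    have h4 : ξ - t + δ = ξ - r := by rw [hδdef]; ring
    rw [h4]
  -- integrability of the pieces
  have int1 : IntegrableOn (fun ξ => φ ξ ^ 2) (Ioc 0 r) :=
    (integrableOn_zero).congr_fun e1.symm measurableSet_Ioc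
  have int2 : IntegrableOn (fun ξ => φ ξ ^ 2) (Ioc r t) := by
    have h : IntervalIntegrable (fun x : ℝ => x ^ (2 * α - 2)) volume 0 δ :=
      intervalIntegrable_rpow' (by linarith)
    have h2 := h.comp_sub_right r
    rw [zero_add, hδdef, sub_add_cancel] at h2
    exact ((intervalIntegrable_iff_integrableOn_Ioc_of_le hrt.le).1 h2).congr_fun
      e2.symm measurableSet_Ioc
  have int3 : IntegrableOn (fun ξ => φ ξ ^ 2) (Ioc t T) := by
    have h : IntervalIntegrable g volume 0 (T - t) := by
      rw [intervalIntegrable_iff_integrableOn_Ioc_of_le (by linarith)]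
      exact hgint.mono_set Ioc_subset_Ioi_self
    have h2 := h.comp_sub_right t
    rw [zero_add, sub_add_cancel] at h2
    exact ((intervalIntegrable_iff_integrableOn_Ioc_of_le htT).1 h2).congr_fun
      e3.symm measurableSet_Ioc
  -- values
  have v1 : ∫ ξ in Ioc 0 r, φ ξ ^ 2 = 0 := by
    rw [setIntegral_congr_fun measurableSet_Ioc e1]; simp
  have v2 : ∫ ξ in Ioc r t, φ ξ ^ 2 = δ ^ (2 * α - 1) / (2 * α - 1) := by
    rw [setIntegral_congr_fun measurableSet_Ioc e2, ← intervalIntegral.integral_of_le hrt.le,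
      intervalIntegral.integral_comp_sub_right (fun x => x ^ (2 * α - 2)) r, sub_self,
      ← hδdef, integral_rpow (Or.inl (by linarith))]
    rw [Real.zero_rpow (by intro h; norm_num at h; linarith)]
    rw [show 2 * α - 2 + 1 = 2 * α - 1 by ring]
    ring
  have v3 : ∫ ξ in Ioc t T, φ ξ ^ 2 ≤ δ ^ (2 * α - 1) * I := by
    have step1 : ∫ ξ in Ioc t T, φ ξ ^ 2 = ∫ u in Ioc 0 (T - t), g u := by
      rw [setIntegral_congr_fun measurableSet_Ioc e3, ← intervalIntegral.integral_of_le htT,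
        intervalIntegral.integral_comp_sub_right g t, sub_self,
        intervalIntegral.integral_of_le (by linarith)]
    have step2 : ∫ u in Ioc 0 (T - t), g u ≤ ∫ u in Ioi 0, g u := by
      apply setIntegral_mono_set hgint
      · exact Filter.Eventually.of_forall fun u => sq_nonneg _
      · exact HasSubset.Subset.eventuallyLE Ioc_subset_Ioi_self
    have step3 : ∫ u in Ioi 0, g u = δ ^ (2 * α - 1) * I := by
      have subst := MeasureTheory.integral_comp_mul_left_Ioi g 0 hδ
      rw [mul_zero, smul_eq_mul] at subst
      have e4 : EqOn (fun x => g (δ * x))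
          (fun x => δ ^ (2 * α - 2) * ((x + 1) ^ (α - 1) - x ^ (α - 1)) ^ 2) (Ioi 0) := by
        intro x hx
        have hx0 : (0:ℝ) < x := hx
        have h5 : δ * x + δ = δ * (x + 1) := by ring
        simp only [hg, h5]
        rw [Real.mul_rpow hδ.le hx0.le, Real.mul_rpow hδ.le (by linarith)]
        have h6 : (δ ^ (α-1) * x ^ (α-1) - δ ^ (α-1) * (x+1) ^ (α-1)) ^ 2
            = (δ ^ (α-1)) ^ 2 * ((x+1) ^ (α-1) - x ^ (α-1)) ^ 2 := by ring
        rw [h6]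
        congr 1
        rw [← Real.rpow_natCast (δ ^ (α-1)) 2, ← Real.rpow_mul hδ.le]
        congr 1; push_cast; ring
      rw [setIntegral_congr_fun measurableSet_Ioi e4, MeasureTheory.integral_const_mul, ← hI] at subst
      have hJ : ∫ x in Ioi (0:ℝ), g x = δ * (δ ^ (2 * α - 2) * I) := by
        rw [subst, ← mul_assoc, mul_inv_cancel₀ hδ.ne', one_mul]
      rw [hJ, ← mul_assoc]
      congr 1
      rw [show 2 * α - 1 = 1 + (2 * α - 2) by ring, Real.rpow_add hδ, Real.rpow_one]
    calc ∫ ξ in Ioc t T, φ ξ ^ 2 = ∫ u in Ioc 0 (T - t), g u := step1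
      _ ≤ ∫ u in Ioi 0, g u := step2
      _ = δ ^ (2 * α - 1) * I := step3
  -- assemble
  have split : ∫ ξ in Ioo 0 T, φ ξ ^ 2
      = (∫ ξ in Ioc 0 r, φ ξ ^ 2) + (∫ ξ in Ioc r t, φ ξ ^ 2) + ∫ ξ in Ioc t T, φ ξ ^ 2 := by
    rw [← integral_Ioc_eq_integral_Ioo,
      ← Set.Ioc_union_Ioc_eq_Ioc (hr.trans hrt.le) htT,
      ← Set.Ioc_union_Ioc_eq_Ioc hr hrt.le,
      setIntegral_union (Disjoint.union_left ((Ioc_disjoint_Ioc_of_le le_rfl).mono_left (Set.Ioc_subset_Ioc_right hrt.le))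
        (Ioc_disjoint_Ioc_of_le le_rfl)) measurableSet_Ioc (int1.union int2) int3,
      setIntegral_union (Ioc_disjoint_Ioc_of_le le_rfl) measurableSet_Ioc int1 int2]
  rw [split, v1, v2, zero_add]
  have hring : δ ^ (2*α-1) * (1/(2*α-1) + I) = δ ^ (2*α-1) / (2*α-1) + δ ^ (2*α-1) * I := by
    ring
  rw [hring]
  linarith

set_option maxHeartbeats 1000000 in
/-- With `C_α = (1/Γ(α)) (1/(2α−1) + ∫₀^∞ ((ξ+1)^(α−1) − ξ^(α−1))² dξ)^(1/2) > 0`,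
for all `0 ≤ r ≤ t ≤ T` and `x ∈ ℝ^d`, `‖σ(t)x − σ(r)x‖₂ ≤ C_α |t−r|^(α−1/2) |x|`; in particular
`t ↦ σ(t)` is `(α−1/2)`-Hölder continuous from `[0,T]` to `ℒ(ℝ^d; H)`. -/
theorem statement3 (d : ℕ) (hd : 1 ≤ d) (T α : ℝ) (hT : 0 < T)
    (hα1 : 1 / 2 < α) (hα2 : α < 1)
    (σ : ℝ → EuclideanSpace ℝ (Fin d) →L[ℝ] HSp d T)
    (hσ : ∀ t ∈ Set.Icc (0 : ℝ) T, ∀ x : EuclideanSpace ℝ (Fin d),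
      ∀ᵐ ξ ∂fracMeas T,
        (σ t x : ℝ → EuclideanSpace ℝ (Fin d)) ξ =
          if t < ξ then ((ξ - t) ^ (α - 1) / Real.Gamma α) • x else 0) :
    let Cα : ℝ := (1 / Real.Gamma α) *
      Real.sqrt (1 / (2 * α - 1) +
        ∫ ξ in Set.Ioi (0 : ℝ), ((ξ + 1) ^ (α - 1) - ξ ^ (α - 1)) ^ 2)
    0 < Cα ∧
      (∀ r t : ℝ, 0 ≤ r → r ≤ t → t ≤ T → ∀ x : EuclideanSpace ℝ (Fin d),
        ‖σ t x - σ r x‖ ≤ Cα * (t - r) ^ (α - 1 / 2) * ‖x‖) ∧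
      (∀ r t : ℝ, 0 ≤ r → r ≤ t → t ≤ T →
        ‖σ t - σ r‖ ≤ Cα * (t - r) ^ (α - 1 / 2)) := by
  intro Cα
  have hΓ : 0 < Real.Gamma α := Real.Gamma_pos_of_pos (by linarith)
  set I := ∫ ξ in Set.Ioi (0 : ℝ), ((ξ + 1) ^ (α - 1) - ξ ^ (α - 1)) ^ 2 with hIdef
  have hIpos : 0 ≤ I := setIntegral_nonneg measurableSet_Ioi fun ξ _ => sq_nonneg _
  have h2α : (0:ℝ) < 2 * α - 1 := by linarith
  have hS : 0 < 1 / (2 * α - 1) + I := by positivity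
  have hCval : Cα = (1 / Real.Gamma α) * Real.sqrt (1 / (2 * α - 1) + I) := rfl
  have hCα : 0 < Cα := by rw [hCval]; positivity
  have hCsq : Cα ^ 2 = (1 / Real.Gamma α ^ 2) * (1 / (2 * α - 1) + I) := by
    rw [hCval, mul_pow, Real.sq_sqrt hS.le, div_pow, one_pow]
  have main : ∀ r t : ℝ, 0 ≤ r → r ≤ t → t ≤ T → ∀ x : EuclideanSpace ℝ (Fin d),
      ‖σ t x - σ r x‖ ≤ Cα * (t - r) ^ (α - 1 / 2) * ‖x‖ := by
    intro r t hr hrt htT x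
    rcases eq_or_lt_of_le hrt with h | hrt'
    · subst h
      simp only [sub_self, norm_zero]
      positivity
    · have h0t : (0:ℝ) ≤ t := hr.trans hrt
      have hδ : (0:ℝ) < t - r := by linarith
      have hσt := hσ t ⟨h0t, htT⟩ x
      have hσr := hσ r ⟨hr, by linarith⟩ x
      set f : HSp d T := σ t x - σ r x with hf
      set φ := fun ξ : ℝ =>
        (if t < ξ then (ξ - t) ^ (α - 1) else 0) - (if r < ξ then (ξ - r) ^ (α - 1) else 0)
        with hφ
      have hae : ∀ᵐ ξ ∂fracMeas T,
          ‖(f : ℝ → EuclideanSpace ℝ (Fin d)) ξ‖ ^ 2 = φ ξ ^ 2 / Real.Gamma α ^ 2 * ‖x‖ ^ 2 := by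
        filter_upwards [hσt, hσr, Lp.coeFn_sub (σ t x) (σ r x)] with ξ h1 h2 h3
        rw [hf, h3, Pi.sub_apply, h1, h2]
        have h4 : (if t < ξ then ((ξ - t) ^ (α - 1) / Real.Gamma α) • x else 0) -
            (if r < ξ then ((ξ - r) ^ (α - 1) / Real.Gamma α) • x else 0)
            = (φ ξ / Real.Gamma α) • x := by
          simp only [hφ]
          split_ifs <;> simp [sub_div, sub_smul, zero_div, neg_div, neg_smul]
        rw [h4, norm_smul, mul_pow, Real.norm_eq_abs, sq_abs, div_pow]
      have hnorm : ‖f‖ ^ 2 = ∫ ξ, ‖(f : ℝ → EuclideanSpace ℝ (Fin d)) ξ‖ ^ 2 ∂fracMeas T := by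
        rw [← real_inner_self_eq_norm_sq, MeasureTheory.L2.inner_def]
        exact integral_congr_ae (Filter.Eventually.of_forall fun ξ =>
          real_inner_self_eq_norm_sq _)
      rw [integral_congr_ae hae] at hnorm
      have hval : ∫ ξ, φ ξ ^ 2 / Real.Gamma α ^ 2 * ‖x‖ ^ 2 ∂fracMeas T
          = (‖x‖ ^ 2 / Real.Gamma α ^ 2) * ∫ ξ in Set.Ioo 0 T, φ ξ ^ 2 := by
        show ∫ ξ in Set.Ioo 0 T, φ ξ ^ 2 / Real.Gamma α ^ 2 * ‖x‖ ^ 2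
            = (‖x‖ ^ 2 / Real.Gamma α ^ 2) * ∫ ξ in Set.Ioo 0 T, φ ξ ^ 2
        rw [← MeasureTheory.integral_const_mul]
        congr 1; ext ξ; ring
      have hkey := st3_key hα1 hα2 hr hrt' htT
      have hRHS : (Cα * (t - r) ^ (α - 1 / 2) * ‖x‖) ^ 2
          = (‖x‖ ^ 2 / Real.Gamma α ^ 2) * ((t - r) ^ (2 * α - 1) * (1 / (2 * α - 1) + I)) := by
        have hp : ((t - r) ^ (α - 1 / 2)) ^ 2 = (t - r) ^ (2 * α - 1) := by
          rw [← Real.rpow_natCast ((t - r) ^ (α - 1 / 2)) 2, ← Real.rpow_mul hδ.le]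
          congr 1; push_cast; ring
        rw [mul_pow, mul_pow, hp, hCsq]; ring
      have hsq : ‖f‖ ^ 2 ≤ (Cα * (t - r) ^ (α - 1 / 2) * ‖x‖) ^ 2 := by
        rw [hnorm, hval, hRHS]
        exact mul_le_mul_of_nonneg_left hkey (by positivity)
      have hR0 : 0 ≤ Cα * (t - r) ^ (α - 1 / 2) * ‖x‖ := by positivity
      calc ‖f‖ = Real.sqrt (‖f‖ ^ 2) := (Real.sqrt_sq (norm_nonneg f)).symm
        _ ≤ Real.sqrt ((Cα * (t - r) ^ (α - 1 / 2) * ‖x‖) ^ 2) := Real.sqrt_le_sqrt hsq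
        _ = Cα * (t - r) ^ (α - 1 / 2) * ‖x‖ := Real.sqrt_sq hR0
  refine ⟨hCα, main, fun r t hr hrt htT => ?_⟩
  refine ContinuousLinearMap.opNorm_le_bound _ ?_ fun x => ?_
  · exact mul_nonneg hCα.le (Real.rpow_nonneg (by linarith) _)
  · rw [ContinuousLinearMap.sub_apply]
    exact main r t hr hrt htT x
end
end

section
/- Suppose B̄ satisfies Assumption (B1). Let (Ω, F, ℙ) be a probability space and q ≥ 2. Then for every 0 ≤ s ≤ t ≤ T and every ψ ∈ L^q(Ω; H) there exists a unique (up to ℙ-a.e. equality) w ∈ L^q(Ω; H) such that for ℙ-a.e. ω ∈ Ω, w(ω) solves the Volterra fixed-point equation E(s,t,ψ(ω)). -/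
open MeasureTheory

noncomputable section

/-- The space `H_⊗ = L²((0,T)×(0,T); ℝ^d)`. -/
abbrev HTen (d : ℕ) (T : ℝ) :=
  Lp (EuclideanSpace ℝ (Fin d)) 2 ((fracMeas T).prod (fracMeas T))

/-- **Assumption (B1)**: growth, Lipschitz continuity, the Volterra property and causality
of the extended drift `B̄ : H → H_⊗`. -/
structure AssumptionB1 (d : ℕ) (T : ℝ) (B : HSp d T → HTen d T) (C₀ : ℝ) : Prop where
  growth : ∀ w : HSp d T, ‖B w‖ ≤ C₀ * (1 + ‖w‖)
  lipschitz : ∀ w₁ w₂ : HSp d T, ‖B w₁ - B w₂‖ ≤ C₀ * ‖w₁ - w₂‖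
  volterra : ∀ w : HSp d T,
    ∀ᵐ p ∂(fracMeas T).prod (fracMeas T),
      p.2 < p.1 → (B w : ℝ × ℝ → EuclideanSpace ℝ (Fin d)) p = 0
  causal : ∀ t : ℝ, 0 < t → t ≤ T → ∀ w₁ w₂ : HSp d T,
    (∀ᵐ ξ ∂fracMeas T, ξ < t →
        (w₁ : ℝ → EuclideanSpace ℝ (Fin d)) ξ = (w₂ : ℝ → EuclideanSpace ℝ (Fin d)) ξ) →
      ∀ᵐ r ∂fracMeas T, r < t →
        ∀ᵐ ξ ∂fracMeas T,
          (B w₁ : ℝ × ℝ → EuclideanSpace ℝ (Fin d)) (r, ξ) =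
            (B w₂ : ℝ × ℝ → EuclideanSpace ℝ (Fin d)) (r, ξ)

/-- `w` solves the Volterra fixed-point equation `E(s,t,ψ)`:
`w(ξ) = ψ(ξ) + ∫ₛᵗ B̄(w)(r,ξ) dr` for a.e. `ξ ∈ (0,T)`. -/
def SolvesE (d : ℕ) (T : ℝ) (B : HSp d T → HTen d T) (s t : ℝ)
    (ψ w : HSp d T) : Prop :=
  ∀ᵐ ξ ∂fracMeas T,
    (w : ℝ → EuclideanSpace ℝ (Fin d)) ξ =
      (ψ : ℝ → EuclideanSpace ℝ (Fin d)) ξ +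
        ∫ r in Set.Ioc s t, (B w : ℝ × ℝ → EuclideanSpace ℝ (Fin d)) (r, ξ)


open ENNReal Set Filter

namespace St5

instance (T : ℝ) : IsFiniteMeasure (fracMeas T) :=
  ⟨by rw [Measure.restrict_apply_univ]; simp [Real.volume_Ioo]⟩

variable {d : ℕ} {T s t u : ℝ}

lemma restrict_Ioc (hs : 0 ≤ s) (ht : t ≤ T) :
    volume.restrict (Set.Ioc s t) = (fracMeas T).restrict (Set.Ioc s t) := by
  rw [Measure.restrict_restrict measurableSet_Ioc]
  refine (Measure.restrict_congr_set ?_).symm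
  rw [Filter.eventuallyEq_set]
  have h1 : {x : ℝ | x ∈ Set.Ioc s t ∩ Set.Ioo 0 T ↔ x ∈ Set.Ioc s t} ⊇ {T}ᶜ := by
    intro x hx
    simp only [Set.mem_setOf_eq, Set.mem_inter_iff, and_iff_left_iff_imp]
    intro h1
    constructor
    · linarith [h1.1]
    · rcases lt_or_eq_of_le (h1.2.trans ht) with h | h
      · exact h
      · exact absurd h hx
  refine Filter.eventually_of_mem ?_ (fun x hx => h1 hx)
  rw [mem_ae_iff]
  simp

/-- swap an a.e. statement on a product of equal (s-finite) measures -/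
lemma ae_swap {μ : Measure ℝ} [SFinite μ] {P : ℝ × ℝ → Prop}
    (h : ∀ᵐ p ∂μ.prod μ, P p) : ∀ᵐ p ∂μ.prod μ, P (p.2, p.1) := by
  rw [← Measure.prod_swap] at h
  exact ae_of_ae_map measurable_swap.aemeasurable h

end St5

namespace St5

variable {α : Type*} [MeasurableSpace α] {μ : Measure α}

lemma sq_eLpNorm {F : Type*} [NormedAddCommGroup F] (f : α → F) :
    (eLpNorm f 2 μ) ^ (2 : ℕ) = ∫⁻ x, (‖f x‖₊ : ℝ≥0∞) ^ (2 : ℕ) ∂μ := by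
  rw [eLpNorm_eq_lintegral_rpow_enorm_toReal two_ne_zero ENNReal.ofNat_ne_top]
  have h2 : ∀ x : ℝ≥0∞, x ^ ((2 : ℝ≥0∞)).toReal = x ^ (2 : ℕ) := fun x => by
    rw [ENNReal.toReal_ofNat, ← ENNReal.rpow_natCast]; norm_num
  simp only [h2]
  rw [← ENNReal.rpow_natCast _ 2, ← ENNReal.rpow_mul]
  norm_num
  rfl

lemma lintegral_le_sqrt_mul {f : α → ℝ≥0∞} (hf : AEMeasurable f μ) :
    ∫⁻ x, f x ∂μ ≤ (∫⁻ x, f x ^ (2 : ℕ) ∂μ) ^ (1/2 : ℝ) * (μ Set.univ) ^ (1/2 : ℝ) := by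
  have h2 : Real.HolderConjugate 2 2 := ⟨by norm_num, by norm_num, by norm_num⟩
  calc ∫⁻ x, f x ∂μ = ∫⁻ x, f x * 1 ∂μ := by simp
    _ ≤ (∫⁻ x, f x ^ (2:ℝ) ∂μ) ^ (1/2 : ℝ) * (∫⁻ x, (1:ℝ≥0∞) ^ (2:ℝ) ∂μ) ^ (1/2 : ℝ) :=
        ENNReal.lintegral_mul_le_Lp_mul_Lq μ h2 hf aemeasurable_const
    _ = _ := by
        congr 1
        · congr 1
          apply lintegral_congr; intro x
          rw [← ENNReal.rpow_natCast]; norm_num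
        · simp [lintegral_one]

end St5

namespace St5

variable {d : ℕ} {T s t u : ℝ}

lemma coe_sq_lt_top (g : HTen d T) :
    ∫⁻ p, (‖(g : ℝ × ℝ → EuclideanSpace ℝ (Fin d)) p‖₊ : ℝ≥0∞) ^ (2:ℕ)
      ∂((fracMeas T).prod (fracMeas T)) < ∞ := by
  rw [← sq_eLpNorm]
  exact ENNReal.pow_lt_top (Lp.eLpNorm_lt_top g)

lemma aesm_swap (g : HTen d T) :
    AEStronglyMeasurable (fun p : ℝ × ℝ => (g : ℝ × ℝ → EuclideanSpace ℝ (Fin d)) (p.2, p.1))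
      ((fracMeas T).prod (fracMeas T)) :=
  (Lp.aestronglyMeasurable g).comp_quasiMeasurePreserving
    (Measure.measurePreserving_swap.quasiMeasurePreserving)

lemma slice_ae (g : HTen d T) :
    ∀ᵐ ξ ∂(fracMeas T),
      AEStronglyMeasurable (fun r => (g : ℝ × ℝ → EuclideanSpace ℝ (Fin d)) (r, ξ)) (fracMeas T) ∧
      ∫⁻ r, (‖(g : ℝ × ℝ → EuclideanSpace ℝ (Fin d)) (r, ξ)‖₊ : ℝ≥0∞) ^ (2:ℕ)
        ∂(fracMeas T) < ∞ := by
  set μ := fracMeas T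
  set G : ℝ × ℝ → ℝ≥0∞ :=
    fun p => (‖(g : ℝ × ℝ → EuclideanSpace ℝ (Fin d)) p‖₊ : ℝ≥0∞) ^ (2:ℕ) with hG
  have hGm : AEMeasurable G (μ.prod μ) := ((Lp.aestronglyMeasurable g).enorm).pow_const 2
  have h1 : ∀ᵐ ξ ∂μ,
      AEStronglyMeasurable (fun r => (g : ℝ × ℝ → EuclideanSpace ℝ (Fin d)) (r, ξ)) μ :=
    (aesm_swap g).prodMk_left
  set G₀ := hGm.mk G with hG₀
  have hG₀m : Measurable G₀ := hGm.measurable_mk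
  have heq : ∀ᵐ ξ ∂μ, ∀ᵐ r ∂μ, G (r, ξ) = G₀ (r, ξ) :=
    Measure.ae_ae_of_ae_prod (ae_swap hGm.ae_eq_mk)
  have h0 : ∫⁻ ξ, ∫⁻ r, G₀ (r, ξ) ∂μ ∂μ < ∞ := by
    rw [← lintegral_prod_symm G₀ hG₀m.aemeasurable,
      lintegral_congr_ae hGm.ae_eq_mk.symm]
    exact coe_sq_lt_top g
  have hfin₀ : ∀ᵐ ξ ∂μ, ∫⁻ r, G₀ (r, ξ) ∂μ < ∞ :=
    ae_lt_top hG₀m.lintegral_prod_left' h0.ne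
  filter_upwards [h1, heq, hfin₀] with ξ hm he hf
  refine ⟨hm, ?_⟩
  rw [show (∫⁻ r, (‖(g : ℝ × ℝ → EuclideanSpace ℝ (Fin d)) (r, ξ)‖₊ : ℝ≥0∞) ^ (2:ℕ) ∂μ)
      = ∫⁻ r, G₀ (r, ξ) ∂μ from lintegral_congr_ae he]
  exact hf

lemma slice_integrableOn (g : HTen d T) (hs : 0 ≤ s) (ht : t ≤ T) :
    ∀ᵐ ξ ∂(fracMeas T),
      IntegrableOn (fun r => (g : ℝ × ℝ → EuclideanSpace ℝ (Fin d)) (r, ξ))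
        (Set.Ioc s t) volume := by
  filter_upwards [slice_ae g] with ξ h
  obtain ⟨hm, hf⟩ := h
  have hint : Integrable (fun r => (g : ℝ × ℝ → EuclideanSpace ℝ (Fin d)) (r, ξ))
      (fracMeas T) := by
    refine ⟨hm, ?_⟩
    refine lt_of_le_of_lt (lintegral_le_sqrt_mul hm.enorm) ?_
    exact ENNReal.mul_lt_top
      (ENNReal.rpow_lt_top_of_nonneg (by norm_num) hf.ne)
      (ENNReal.rpow_lt_top_of_nonneg (by norm_num) (measure_ne_top _ _))
  rw [IntegrableOn, restrict_Ioc hs ht]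
  exact hint.mono_measure Measure.restrict_le_self

end St5

namespace St5

variable {d : ℕ} {T s t u : ℝ}

def Ifun (g : HTen d T) (s t : ℝ) : ℝ → EuclideanSpace ℝ (Fin d) :=
  fun ξ => ∫ r in Set.Ioc s t, (g : ℝ × ℝ → EuclideanSpace ℝ (Fin d)) (r, ξ)

lemma aesm_Ifun (g : HTen d T) (hs : 0 ≤ s) (ht : t ≤ T) :
    AEStronglyMeasurable (Ifun g s t) (fracMeas T) := by
  set μ := fracMeas T
  set ν := μ.restrict (Set.Ioc s t) with hν
  have hk : AEStronglyMeasurable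
      (fun p : ℝ × ℝ => (g : ℝ × ℝ → EuclideanSpace ℝ (Fin d)) (p.2, p.1)) (μ.prod ν) :=
    (aesm_swap g).mono_ac
      (Measure.AbsolutelyContinuous.prod Measure.AbsolutelyContinuous.rfl
        Measure.restrict_le_self.absolutelyContinuous)
  have h := hk.integral_prod_right'
  have : Ifun g s t = fun ξ => ∫ r, (g : ℝ × ℝ → EuclideanSpace ℝ (Fin d)) (r, ξ) ∂ν := by
    funext ξ
    unfold Ifun
    rw [restrict_Ioc hs ht]
  rw [this]
  exact h

lemma le_of_sq_le_sq {a b : ℝ≥0∞} (h : a ^ (2:ℕ) ≤ b ^ (2:ℕ)) : a ≤ b := by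
  have h1 : ∀ x : ℝ≥0∞, (x ^ (2:ℕ)) ^ (1/2 : ℝ) = x := fun x => by
    rw [← ENNReal.rpow_natCast x 2, ← ENNReal.rpow_mul]
    norm_num
  calc a = (a ^ (2:ℕ)) ^ (1/2 : ℝ) := (h1 a).symm
    _ ≤ (b ^ (2:ℕ)) ^ (1/2 : ℝ) := ENNReal.rpow_le_rpow h (by norm_num)
    _ = b := h1 b

lemma eLpNorm_Ifun_le (g : HTen d T) (hs : 0 ≤ s) (hst : s ≤ t) (ht : t ≤ T) :
    eLpNorm (Ifun g s t) 2 (fracMeas T) ≤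
      ENNReal.ofReal (t - s) ^ (1/2 : ℝ) *
        eLpNorm (g : ℝ × ℝ → EuclideanSpace ℝ (Fin d)) 2 ((fracMeas T).prod (fracMeas T)) := by
  set μ := fracMeas T
  set ν := μ.restrict (Set.Ioc s t) with hν
  have hνle : ν Set.univ ≤ ENNReal.ofReal (t - s) := by
    rw [hν, Measure.restrict_apply_univ]
    calc μ (Set.Ioc s t) ≤ volume (Set.Ioc s t) := Measure.restrict_le_self _
      _ = ENNReal.ofReal (t - s) := Real.volume_Ioc
  -- pointwise bound
  have key : ∀ᵐ ξ ∂μ, (‖Ifun g s t ξ‖₊ : ℝ≥0∞) ^ (2:ℕ) ≤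
      ENNReal.ofReal (t - s) *
        ∫⁻ r, (‖(g : ℝ × ℝ → EuclideanSpace ℝ (Fin d)) (r, ξ)‖₊ : ℝ≥0∞) ^ (2:ℕ) ∂μ := by
    filter_upwards [slice_ae g] with ξ hξ
    obtain ⟨hm, _⟩ := hξ
    have h1 : (‖Ifun g s t ξ‖₊ : ℝ≥0∞) ≤
        ∫⁻ r, (‖(g : ℝ × ℝ → EuclideanSpace ℝ (Fin d)) (r, ξ)‖₊ : ℝ≥0∞) ∂ν := by
      unfold Ifun
      rw [restrict_Ioc hs ht]
      exact enorm_integral_le_lintegral_enorm _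
    have h2 := lintegral_le_sqrt_mul (μ := ν)
      (f := fun r => (‖(g : ℝ × ℝ → EuclideanSpace ℝ (Fin d)) (r, ξ)‖₊ : ℝ≥0∞))
      (hm.restrict.enorm)
    have h3 : (‖Ifun g s t ξ‖₊ : ℝ≥0∞) ^ (2:ℕ) ≤
        ((∫⁻ r, (‖(g : ℝ × ℝ → EuclideanSpace ℝ (Fin d)) (r, ξ)‖₊ : ℝ≥0∞) ^ (2:ℕ) ∂ν) ^ (1/2:ℝ)
          * (ν Set.univ) ^ (1/2:ℝ)) ^ (2:ℕ) :=
      pow_le_pow_left' (h1.trans h2) 2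
    refine h3.trans ?_
    rw [mul_pow]
    have h4 : ∀ x : ℝ≥0∞, (x ^ (1/2:ℝ)) ^ (2:ℕ) = x := fun x => by
      rw [← ENNReal.rpow_natCast (x ^ (1/2:ℝ)) 2, ← ENNReal.rpow_mul]
      norm_num
    rw [h4, h4, mul_comm]
    exact mul_le_mul' hνle (lintegral_mono' Measure.restrict_le_self le_rfl)
  -- integrate
  refine le_of_sq_le_sq ?_
  have h4 : ∀ x : ℝ≥0∞, (x ^ (1/2:ℝ)) ^ (2:ℕ) = x := fun x => by
    rw [← ENNReal.rpow_natCast (x ^ (1/2:ℝ)) 2, ← ENNReal.rpow_mul]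
    norm_num
  rw [mul_pow, sq_eLpNorm, sq_eLpNorm, h4]
  have step1 : ∫⁻ ξ, (‖Ifun g s t ξ‖₊ : ℝ≥0∞) ^ (2:ℕ) ∂μ ≤
      ENNReal.ofReal (t - s) *
        ∫⁻ ξ, ∫⁻ r, (‖(g : ℝ × ℝ → EuclideanSpace ℝ (Fin d)) (r, ξ)‖₊ : ℝ≥0∞) ^ (2:ℕ) ∂μ ∂μ := by
    rw [← lintegral_const_mul' _ _ ENNReal.ofReal_ne_top]
    exact lintegral_mono_ae key
  refine step1.trans ?_
  rw [← lintegral_prod_symm (fun p => (‖(g : ℝ × ℝ → EuclideanSpace ℝ (Fin d)) p‖₊ : ℝ≥0∞) ^ (2:ℕ))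
    (((Lp.aestronglyMeasurable g).enorm).pow_const 2)]

end St5

namespace St5

variable {d : ℕ} {T s t u : ℝ}

lemma memℒp_Ifun (g : HTen d T) (hs : 0 ≤ s) (hst : s ≤ t) (ht : t ≤ T) :
    MemLp (Ifun g s t) 2 (fracMeas T) :=
  ⟨aesm_Ifun g hs ht, lt_of_le_of_lt (eLpNorm_Ifun_le g hs hst ht)
    (ENNReal.mul_lt_top (ENNReal.rpow_lt_top_of_nonneg (by norm_num) ENNReal.ofReal_ne_top)
      (Lp.eLpNorm_lt_top g))⟩

def Iop (g : HTen d T) (hs : 0 ≤ s) (hst : s ≤ t) (ht : t ≤ T) : HSp d T :=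
  (memℒp_Ifun g hs hst ht).toLp _

lemma coeFn_Iop (g : HTen d T) (hs : 0 ≤ s) (hst : s ≤ t) (ht : t ≤ T) :
    (Iop g hs hst ht : ℝ → EuclideanSpace ℝ (Fin d)) =ᵐ[fracMeas T] Ifun g s t :=
  MemLp.coeFn_toLp _

lemma norm_Iop_le (g : HTen d T) (hs : 0 ≤ s) (hst : s ≤ t) (ht : t ≤ T) :
    ‖Iop g hs hst ht‖ ≤ Real.sqrt (t - s) * ‖g‖ := by
  rw [Lp.norm_def, eLpNorm_congr_ae (coeFn_Iop g hs hst ht), Lp.norm_def]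
  have hfin : ENNReal.ofReal (t - s) ^ (1/2 : ℝ) *
      eLpNorm (g : ℝ × ℝ → EuclideanSpace ℝ (Fin d)) 2 ((fracMeas T).prod (fracMeas T)) ≠ ∞ :=
    ENNReal.mul_ne_top (ENNReal.rpow_ne_top_of_nonneg (by norm_num) ENNReal.ofReal_ne_top)
      (Lp.eLpNorm_ne_top g)
  refine le_trans (ENNReal.toReal_mono hfin (eLpNorm_Ifun_le g hs hst ht)) ?_
  rw [ENNReal.toReal_mul, ← ENNReal.toReal_rpow, ENNReal.toReal_ofReal (by linarith)]
  rw [← Real.sqrt_eq_rpow]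

lemma Iop_sub (g₁ g₂ : HTen d T) (hs : 0 ≤ s) (hst : s ≤ t) (ht : t ≤ T) :
    Iop (g₁ - g₂) hs hst ht = Iop g₁ hs hst ht - Iop g₂ hs hst ht := by
  apply Lp.ext
  have h5 : ∀ᵐ ξ ∂fracMeas T, ∀ᵐ r ∂fracMeas T,
      ((g₁ - g₂ : HTen d T) : ℝ × ℝ → EuclideanSpace ℝ (Fin d)) (r, ξ) =
        (g₁ : ℝ × ℝ → EuclideanSpace ℝ (Fin d)) (r, ξ) -
        (g₂ : ℝ × ℝ → EuclideanSpace ℝ (Fin d)) (r, ξ) := by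
    have := ae_swap (Lp.coeFn_sub g₁ g₂)
    exact Measure.ae_ae_of_ae_prod (by filter_upwards [this] with p hp; exact hp)
  filter_upwards [coeFn_Iop (g₁ - g₂) hs hst ht,
    Lp.coeFn_sub (Iop g₁ hs hst ht) (Iop g₂ hs hst ht),
    coeFn_Iop g₁ hs hst ht, coeFn_Iop g₂ hs hst ht,
    slice_integrableOn g₁ hs ht, slice_integrableOn g₂ hs ht, h5]
      with ξ h0 hsub h1 h2 hint1 hint2 hae
  rw [h0, hsub, Pi.sub_apply, h1, h2]
  unfold Ifun
  have hae' : ∀ᵐ r ∂(volume.restrict (Set.Ioc s t)),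
      ((g₁ - g₂ : HTen d T) : ℝ × ℝ → EuclideanSpace ℝ (Fin d)) (r, ξ) =
        (g₁ : ℝ × ℝ → EuclideanSpace ℝ (Fin d)) (r, ξ) -
        (g₂ : ℝ × ℝ → EuclideanSpace ℝ (Fin d)) (r, ξ) := by
    rw [restrict_Ioc hs ht]
    exact ae_restrict_of_ae hae
  rw [integral_congr_ae hae']
  exact integral_sub hint1 hint2

end St5

namespace St5

variable {d : ℕ} {T s t u : ℝ} {B : HSp d T → HTen d T} {C₀ : ℝ}

def Fmap (B : HSp d T → HTen d T) (hs : 0 ≤ s) (hst : s ≤ t) (ht : t ≤ T)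
    (w : HSp d T) : HSp d T :=
  Iop (B w) hs hst ht

lemma coeFn_Fmap (hs : 0 ≤ s) (hst : s ≤ t) (ht : t ≤ T) (w : HSp d T) :
    (Fmap B hs hst ht w : ℝ → EuclideanSpace ℝ (Fin d)) =ᵐ[fracMeas T] Ifun (B w) s t :=
  coeFn_Iop _ hs hst ht

lemma norm_Fmap_sub_le (hB : AssumptionB1 d T B C₀) (hs : 0 ≤ s) (hst : s ≤ t) (ht : t ≤ T)
    (w₁ w₂ : HSp d T) :
    ‖Fmap B hs hst ht w₁ - Fmap B hs hst ht w₂‖ ≤ Real.sqrt (t - s) * C₀ * ‖w₁ - w₂‖ := by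
  rw [Fmap, Fmap, ← Iop_sub]
  calc ‖Iop (B w₁ - B w₂) hs hst ht‖ ≤ Real.sqrt (t - s) * ‖B w₁ - B w₂‖ :=
        norm_Iop_le _ hs hst ht
    _ ≤ Real.sqrt (t - s) * (C₀ * ‖w₁ - w₂‖) :=
        mul_le_mul_of_nonneg_left (hB.lipschitz w₁ w₂) (Real.sqrt_nonneg _)
    _ = _ := by ring

lemma norm_Fmap_le (hB : AssumptionB1 d T B C₀) (hs : 0 ≤ s) (hst : s ≤ t) (ht : t ≤ T)
    (w : HSp d T) :
    ‖Fmap B hs hst ht w‖ ≤ Real.sqrt (t - s) * C₀ * (1 + ‖w‖) := by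
  calc ‖Iop (B w) hs hst ht‖ ≤ Real.sqrt (t - s) * ‖B w‖ := norm_Iop_le _ hs hst ht
    _ ≤ Real.sqrt (t - s) * (C₀ * (1 + ‖w‖)) :=
        mul_le_mul_of_nonneg_left (hB.growth w) (Real.sqrt_nonneg _)
    _ = _ := by ring

lemma solvesE_iff (hs : 0 ≤ s) (hst : s ≤ t) (ht : t ≤ T) (φ w : HSp d T) :
    SolvesE d T B s t φ w ↔ w = φ + Fmap B hs hst ht w := by
  constructor
  · intro h
    apply Lp.ext
    filter_upwards [h, Lp.coeFn_add φ (Fmap B hs hst ht w), coeFn_Fmap hs hst ht w]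
      with ξ h1 h2 h3
    rw [h2, Pi.add_apply, h3]
    exact h1
  · intro h
    have hc : (w : ℝ → EuclideanSpace ℝ (Fin d)) =ᵐ[fracMeas T]
        (φ + Fmap B hs hst ht w : HSp d T) := by rw [← h]
    filter_upwards [hc, Lp.coeFn_add φ (Fmap B hs hst ht w), coeFn_Fmap hs hst ht w]
      with ξ h1 h2 h3
    rw [h1, h2, Pi.add_apply, h3]
    rfl

lemma volterra_slice (hB : AssumptionB1 d T B C₀) (w : HSp d T)
    (hu : 0 ≤ u) (ht : t ≤ T) :
    ∀ᵐ ξ ∂fracMeas T, ξ < u →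
      (∫ r in Set.Ioc u t, (B w : ℝ × ℝ → EuclideanSpace ℝ (Fin d)) (r, ξ)) = 0 := by
  have h := Measure.ae_ae_of_ae_prod (ae_swap (hB.volterra w))
  filter_upwards [h] with ξ hξ hlt
  rw [restrict_Ioc hu ht]
  have hz : ∀ᵐ r ∂(fracMeas T).restrict (Set.Ioc u t),
      (B w : ℝ × ℝ → EuclideanSpace ℝ (Fin d)) (r, ξ) = 0 := by
    filter_upwards [ae_restrict_of_ae hξ, ae_restrict_mem measurableSet_Ioc] with r h1 h2
    exact h1 (hlt.trans (h2.1))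
  exact integral_eq_zero_of_ae hz

end St5

namespace St5

variable {d : ℕ} {T s t u : ℝ} {B : HSp d T → HTen d T} {C₀ : ℝ}

lemma causal_slice (hB : AssumptionB1 d T B C₀) (hu0 : 0 < u) (huT : u ≤ T)
    (w₁ w₂ : HSp d T)
    (hagree : ∀ᵐ ξ ∂fracMeas T, ξ < u →
      (w₁ : ℝ → EuclideanSpace ℝ (Fin d)) ξ = (w₂ : ℝ → EuclideanSpace ℝ (Fin d)) ξ)
    (hs : 0 ≤ s) :
    ∀ᵐ ξ ∂fracMeas T,
      (∫ r in Set.Ioc s u, (B w₁ : ℝ × ℝ → EuclideanSpace ℝ (Fin d)) (r, ξ)) =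
      ∫ r in Set.Ioc s u, (B w₂ : ℝ × ℝ → EuclideanSpace ℝ (Fin d)) (r, ξ) := by
  set μ := fracMeas T with hμ
  have hf := Lp.aestronglyMeasurable (B w₁)
  have hg := Lp.aestronglyMeasurable (B w₂)
  set f := (B w₁ : ℝ × ℝ → EuclideanSpace ℝ (Fin d)) with hfd
  set g := (B w₂ : ℝ × ℝ → EuclideanSpace ℝ (Fin d)) with hgd
  set f₀ := hf.mk f with hf₀
  set g₀ := hg.mk g with hg₀
  have hcau := hB.causal u hu0 huT w₁ w₂ hagree
  have hfe : ∀ᵐ r ∂μ, ∀ᵐ ξ ∂μ, f (r, ξ) = f₀ (r, ξ) :=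
    Measure.ae_ae_of_ae_prod hf.ae_eq_mk
  have hge : ∀ᵐ r ∂μ, ∀ᵐ ξ ∂μ, g (r, ξ) = g₀ (r, ξ) :=
    Measure.ae_ae_of_ae_prod hg.ae_eq_mk
  have hcau₀ : ∀ᵐ r ∂μ, r < u → ∀ᵐ ξ ∂μ, f₀ (r, ξ) = g₀ (r, ξ) := by
    filter_upwards [hcau, hfe, hge] with r h1 h2 h3 hlt
    filter_upwards [h1 hlt, h2, h3] with ξ e1 e2 e3
    rw [← e2, ← e3]
    exact e1
  set S : Set (ℝ × ℝ) := {p | p.1 < u} ∩ {p | f₀ p = g₀ p}ᶜ with hS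
  have hSm : MeasurableSet S :=
    (measurable_fst measurableSet_Iio).inter
      (hf.stronglyMeasurable_mk.measurableSet_eq_fun hg.stronglyMeasurable_mk).compl
  have hS0 : (μ.prod μ) S = 0 := by
    rw [Measure.measure_prod_null hSm]
    filter_upwards [hcau₀] with r hr
    simp only [Pi.zero_apply]
    by_cases h : r < u
    · have h2 := hr h
      rw [ae_iff] at h2
      have hset : Prod.mk r ⁻¹' S = {ξ | ¬ f₀ (r, ξ) = g₀ (r, ξ)} := by
        ext ξ
        simp [hS, h]
      rw [hset]
      exact h2
    · have hset : Prod.mk r ⁻¹' S = ∅ := by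
        ext ξ
        simp [hS, h]
      simp [hset]
  have hprod : ∀ᵐ p ∂μ.prod μ, p.1 < u → f p = g p := by
    have h₁ : ∀ᵐ p ∂μ.prod μ, p ∉ S := measure_eq_zero_iff_ae_notMem.1 hS0
    filter_upwards [h₁, hf.ae_eq_mk, hg.ae_eq_mk] with p hp e1 e2 hlt
    rw [e1, e2]
    by_contra hne
    exact hp ⟨hlt, hne⟩
  have hswap : ∀ᵐ ξ ∂μ, ∀ᵐ r ∂μ, r < u → f (r, ξ) = g (r, ξ) :=
    Measure.ae_ae_of_ae_prod (ae_swap hprod)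
  filter_upwards [hswap] with ξ hξ
  rw [restrict_Ioc hs huT]
  apply integral_congr_ae
  have hru : ∀ᵐ r ∂μ.restrict (Set.Ioc s u), r < u := by
    rw [ae_iff]
    have hnot : {r : ℝ | ¬ r < u} = Set.Ici u := by
      ext r
      simp [not_lt]
    rw [hnot, Measure.restrict_apply measurableSet_Ici]
    refine measure_mono_null (t := {u}) ?_ ?_
    · intro r hr
      simp only [Set.mem_singleton_iff]
      exact le_antisymm hr.2.2 hr.1
    · refine le_antisymm ?_ zero_le
      calc μ {u} ≤ volume {u} := Measure.le_iff'.1 Measure.restrict_le_self {u}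
        _ = 0 := Real.volume_singleton
  filter_upwards [ae_restrict_of_ae hξ, hru] with r h1 h2
  exact h1 h2

end St5

namespace St5

variable {d : ℕ} {T s t u : ℝ} {B : HSp d T → HTen d T} {C₀ : ℝ}

lemma integral_split (g : HTen d T) (hs : 0 ≤ s) (hsu : s ≤ u) (hut : u ≤ t) (ht : t ≤ T) :
    ∀ᵐ ξ ∂fracMeas T,
      (∫ r in Set.Ioc s t, (g : ℝ × ℝ → EuclideanSpace ℝ (Fin d)) (r, ξ)) =
        (∫ r in Set.Ioc s u, (g : ℝ × ℝ → EuclideanSpace ℝ (Fin d)) (r, ξ)) +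
        ∫ r in Set.Ioc u t, (g : ℝ × ℝ → EuclideanSpace ℝ (Fin d)) (r, ξ) := by
  filter_upwards [slice_integrableOn g hs ht] with ξ hint
  rw [← Set.Ioc_union_Ioc_eq_Ioc hsu hut]
  exact setIntegral_union (Set.Ioc_disjoint_Ioc_of_le le_rfl) measurableSet_Ioc
    (hint.mono_set (Set.Ioc_subset_Ioc_right hut))
    (hint.mono_set (Set.Ioc_subset_Ioc_left hsu))

lemma glue (hB : AssumptionB1 d T B C₀) (hs : 0 ≤ s) (hsu : s ≤ u) (hut : u ≤ t) (ht : t ≤ T)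
    (φ w₁ w₂ : HSp d T) (h1 : SolvesE d T B s u φ w₁) (h2 : SolvesE d T B u t w₁ w₂) :
    SolvesE d T B s t φ w₂ := by
  rcases eq_or_lt_of_le (hs.trans hsu) with hu0 | hu0
  · -- u = 0, hence s = 0 = u
    have hsu' : s = u := le_antisymm hsu (by rw [← hu0] at *; exact hs)
    have h1' : ∀ᵐ ξ ∂fracMeas T,
        (w₁ : ℝ → EuclideanSpace ℝ (Fin d)) ξ = (φ : ℝ → EuclideanSpace ℝ (Fin d)) ξ := by
      filter_upwards [h1] with ξ H
      rw [H, hsu', Set.Ioc_self, setIntegral_empty, add_zero]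
    filter_upwards [h1', h2] with ξ H1 H2
    rw [H2, H1, hsu']
  · -- 0 < u
    have hvol := volterra_slice (u := u) (t := t) hB w₂ (hs.trans hsu) ht
    have hagree : ∀ᵐ ξ ∂fracMeas T, ξ < u →
        (w₂ : ℝ → EuclideanSpace ℝ (Fin d)) ξ = (w₁ : ℝ → EuclideanSpace ℝ (Fin d)) ξ := by
      filter_upwards [h2, hvol] with ξ H2 Hv hlt
      rw [H2, Hv hlt, add_zero]
    have hcaus := causal_slice (s := s) hB hu0 (hut.trans ht) w₂ w₁ hagree hs
    have hsplit := integral_split (B w₂) hs hsu hut ht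
    filter_upwards [h1, h2, hcaus, hsplit] with ξ H1 H2 Hc Hs
    rw [H2, H1, Hs, Hc, add_assoc]

lemma left_part (hB : AssumptionB1 d T B C₀) (hs : 0 ≤ s) (hsu : s ≤ u) (hut : u ≤ t)
    (ht : t ≤ T) (φ w : HSp d T) (h : SolvesE d T B s t φ w) :
    SolvesE d T B s u φ (φ + Fmap B hs hsu (hut.trans ht) w) := by
  have hw' : ((φ + Fmap B hs hsu (hut.trans ht) w : HSp d T) : ℝ → EuclideanSpace ℝ (Fin d))
      =ᵐ[fracMeas T] fun ξ =>
        (φ : ℝ → EuclideanSpace ℝ (Fin d)) ξ + Ifun (B w) s u ξ := by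
    filter_upwards [Lp.coeFn_add φ (Fmap B hs hsu (hut.trans ht) w),
      coeFn_Fmap hs hsu (hut.trans ht) w] with ξ e1 e2
    rw [e1, Pi.add_apply, e2]
  rcases eq_or_lt_of_le hsu with hsu' | hsu'
  · -- s = u : empty interval
    filter_upwards [hw'] with ξ Hw'
    rw [Hw']
    unfold Ifun
    have hempty : Set.Ioc s u = ∅ := by rw [hsu', Set.Ioc_self]
    rw [hempty, setIntegral_empty, setIntegral_empty, add_zero]
  · have hu0 : 0 < u := lt_of_le_of_lt hs hsu'
    have hvol := volterra_slice (u := u) (t := t) hB w (hs.trans hsu) ht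
    have hsplit := integral_split (B w) hs hsu hut ht
    have hagree : ∀ᵐ ξ ∂fracMeas T, ξ < u →
        ((φ + Fmap B hs hsu (hut.trans ht) w : HSp d T) : ℝ → EuclideanSpace ℝ (Fin d)) ξ =
          (w : ℝ → EuclideanSpace ℝ (Fin d)) ξ := by
      filter_upwards [h, hvol, hsplit, hw'] with ξ H Hv Hs Hw' hlt
      rw [Hw', H, Hs, Hv hlt, add_zero]
      rfl
    have hcaus := causal_slice (s := s) hB hu0 (hut.trans ht)
      (φ + Fmap B hs hsu (hut.trans ht) w) w hagree hs
    filter_upwards [hw', hcaus] with ξ Hw' Hc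
    rw [Hw', Hc]
    rfl

lemma right_part (hB : AssumptionB1 d T B C₀) (hs : 0 ≤ s) (hsu : s ≤ u) (hut : u ≤ t)
    (ht : t ≤ T) (φ w : HSp d T) (h : SolvesE d T B s t φ w) :
    SolvesE d T B u t (φ + Fmap B hs hsu (hut.trans ht) w) w := by
  have hw' : ((φ + Fmap B hs hsu (hut.trans ht) w : HSp d T) : ℝ → EuclideanSpace ℝ (Fin d))
      =ᵐ[fracMeas T] fun ξ =>
        (φ : ℝ → EuclideanSpace ℝ (Fin d)) ξ + Ifun (B w) s u ξ := by
    filter_upwards [Lp.coeFn_add φ (Fmap B hs hsu (hut.trans ht) w),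
      coeFn_Fmap hs hsu (hut.trans ht) w] with ξ e1 e2
    rw [e1, Pi.add_apply, e2]
  have hsplit := integral_split (B w) hs hsu hut ht
  filter_upwards [h, hsplit, hw'] with ξ H Hs Hw'
  rw [Hw', H, Hs, add_assoc]
  rfl

end St5

namespace St5

variable {d : ℕ} {T s t u : ℝ} {B : HSp d T → HTen d T} {C₀ : ℝ}
variable {Ω : Type*} [MeasurableSpace Ω] {ℙ : Measure Ω} [IsProbabilityMeasure ℙ]
variable {p : ℝ≥0∞} [Fact (1 ≤ p)]

lemma lipschitzFmap (hB : AssumptionB1 d T B C₀) (hs : 0 ≤ s) (hst : s ≤ t) (ht : t ≤ T) :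
    LipschitzWith (Real.toNNReal (Real.sqrt (t - s) * C₀)) (Fmap B hs hst ht) := by
  apply LipschitzWith.of_dist_le_mul
  intro x y
  rw [dist_eq_norm, dist_eq_norm]
  refine le_trans (norm_Fmap_sub_le hB hs hst ht x y) ?_
  exact mul_le_mul_of_nonneg_right (Real.le_coe_toNNReal _) (norm_nonneg _)

lemma memℒp_PhiFun (hB : AssumptionB1 d T B C₀) (hs : 0 ≤ s) (hst : s ≤ t) (ht : t ≤ T)
    (ψ W : Lp (HSp d T) p ℙ) :
    MemLp (fun ω => (ψ : Ω → HSp d T) ω + Fmap B hs hst ht ((W : Ω → HSp d T) ω)) p ℙ := by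
  have hsm : AEStronglyMeasurable (fun ω => Fmap B hs hst ht ((W : Ω → HSp d T) ω)) ℙ :=
    ((lipschitzFmap hB hs hst ht).continuous).comp_aestronglyMeasurable
      (Lp.aestronglyMeasurable W)
  refine (Lp.memLp ψ).add (g := fun ω => Fmap B hs hst ht ((W : Ω → HSp d T) ω)) ?_
  have hg : MemLp (fun ω => 1 + ‖(W : Ω → HSp d T) ω‖) p ℙ :=
    (memLp_const 1).add (g := fun ω => ‖(W : Ω → HSp d T) ω‖) (Lp.memLp W).norm
  refine MemLp.of_le_mul (c := Real.sqrt (t - s) * C₀) hg hsm ?_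
  refine Filter.Eventually.of_forall fun ω => ?_
  have h2 : (0:ℝ) ≤ 1 + ‖(W : Ω → HSp d T) ω‖ := by positivity
  rw [Real.norm_of_nonneg h2]
  exact norm_Fmap_le hB hs hst ht _

def Phi (hB : AssumptionB1 d T B C₀) (hs : 0 ≤ s) (hst : s ≤ t) (ht : t ≤ T)
    (ψ W : Lp (HSp d T) p ℙ) : Lp (HSp d T) p ℙ :=
  (memℒp_PhiFun hB hs hst ht ψ W).toLp _

lemma coeFn_Phi (hB : AssumptionB1 d T B C₀) (hs : 0 ≤ s) (hst : s ≤ t) (ht : t ≤ T)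
    (ψ W : Lp (HSp d T) p ℙ) :
    (Phi hB hs hst ht ψ W : Ω → HSp d T) =ᵐ[ℙ]
      fun ω => (ψ : Ω → HSp d T) ω + Fmap B hs hst ht ((W : Ω → HSp d T) ω) :=
  MemLp.coeFn_toLp _

lemma Phi_fix_iff (hB : AssumptionB1 d T B C₀) (hs : 0 ≤ s) (hst : s ≤ t) (ht : t ≤ T)
    (ψ W : Lp (HSp d T) p ℙ) :
    (∀ᵐ ω ∂ℙ, SolvesE d T B s t ((ψ : Ω → HSp d T) ω) ((W : Ω → HSp d T) ω)) ↔
      Phi hB hs hst ht ψ W = W := by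
  constructor
  · intro h
    apply Lp.ext
    filter_upwards [h, coeFn_Phi hB hs hst ht ψ W] with ω h1 h2
    rw [h2]
    exact ((solvesE_iff hs hst ht _ _).1 h1).symm
  · intro h
    have hc : (Phi hB hs hst ht ψ W : Ω → HSp d T) =ᵐ[ℙ] (W : Ω → HSp d T) := by rw [h]
    filter_upwards [hc, coeFn_Phi hB hs hst ht ψ W] with ω h1 h2
    exact (solvesE_iff hs hst ht _ _).2 (h1.symm.trans h2)

end St5

namespace St5

variable {d : ℕ} {T s t u : ℝ} {B : HSp d T → HTen d T} {C₀ : ℝ}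
variable {Ω : Type*} [MeasurableSpace Ω] {ℙ : Measure Ω} [IsProbabilityMeasure ℙ]
variable {p : ℝ≥0∞} [Fact (1 ≤ p)]

lemma norm_Phi_sub_le (hB : AssumptionB1 d T B C₀) (hC₀ : 0 ≤ C₀)
    (hs : 0 ≤ s) (hst : s ≤ t) (ht : t ≤ T) (ψ W₁ W₂ : Lp (HSp d T) p ℙ) :
    ‖Phi hB hs hst ht ψ W₁ - Phi hB hs hst ht ψ W₂‖ ≤
      (Real.sqrt (t - s) * C₀) * ‖W₁ - W₂‖ := by
  set K := Real.sqrt (t - s) * C₀ with hK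
  have hK0 : 0 ≤ K := mul_nonneg (Real.sqrt_nonneg _) hC₀
  have hcoe : ((Phi hB hs hst ht ψ W₁ - Phi hB hs hst ht ψ W₂ : Lp (HSp d T) p ℙ) :
      Ω → HSp d T) =ᵐ[ℙ]
      fun ω => Fmap B hs hst ht ((W₁ : Ω → HSp d T) ω) -
        Fmap B hs hst ht ((W₂ : Ω → HSp d T) ω) := by
    filter_upwards [Lp.coeFn_sub (Phi hB hs hst ht ψ W₁) (Phi hB hs hst ht ψ W₂),
      coeFn_Phi hB hs hst ht ψ W₁, coeFn_Phi hB hs hst ht ψ W₂] with ω e0 e1 e2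
    rw [e0, Pi.sub_apply, e1, e2, add_sub_add_left_eq_sub]
  have h1 : eLpNorm (fun ω => Fmap B hs hst ht ((W₁ : Ω → HSp d T) ω) -
      Fmap B hs hst ht ((W₂ : Ω → HSp d T) ω)) p ℙ ≤
      eLpNorm (fun ω => K * ‖((W₁ - W₂ : Lp (HSp d T) p ℙ) : Ω → HSp d T) ω‖) p ℙ := by
    apply eLpNorm_mono_ae
    filter_upwards [Lp.coeFn_sub W₁ W₂] with ω e
    rw [Real.norm_of_nonneg (by positivity)]
    calc ‖Fmap B hs hst ht ((W₁ : Ω → HSp d T) ω) - Fmap B hs hst ht ((W₂ : Ω → HSp d T) ω)‖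
        ≤ K * ‖(W₁ : Ω → HSp d T) ω - (W₂ : Ω → HSp d T) ω‖ :=
          norm_Fmap_sub_le hB hs hst ht _ _
      _ = K * ‖((W₁ - W₂ : Lp (HSp d T) p ℙ) : Ω → HSp d T) ω‖ := by
          rw [e, Pi.sub_apply]
  have h2 : eLpNorm (fun ω => K * ‖((W₁ - W₂ : Lp (HSp d T) p ℙ) : Ω → HSp d T) ω‖) p ℙ =
      (‖K‖₊ : ℝ≥0∞) * eLpNorm ((W₁ - W₂ : Lp (HSp d T) p ℙ) : Ω → HSp d T) p ℙ := by
    have h2' := eLpNorm_const_smul (c := K)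
      (f := fun ω => ‖((W₁ - W₂ : Lp (HSp d T) p ℙ) : Ω → HSp d T) ω‖) p ℙ
    rw [eLpNorm_norm] at h2'
    have hfun : (K • fun ω => ‖((W₁ - W₂ : Lp (HSp d T) p ℙ) : Ω → HSp d T) ω‖) =
        fun ω => K * ‖((W₁ - W₂ : Lp (HSp d T) p ℙ) : Ω → HSp d T) ω‖ := rfl
    rw [hfun] at h2'
    exact h2'
  rw [Lp.norm_def, eLpNorm_congr_ae hcoe, Lp.norm_def]
  refine le_trans (ENNReal.toReal_mono ?_ (h1.trans_eq h2)) ?_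
  · exact ENNReal.mul_ne_top ENNReal.coe_ne_top (Lp.eLpNorm_ne_top _)
  · rw [ENNReal.toReal_mul, ENNReal.coe_toReal, coe_nnnorm, Real.norm_of_nonneg hK0]

end St5

namespace St5

variable {d : ℕ} {T s t u : ℝ} {B : HSp d T → HTen d T} {C₀ : ℝ}
variable {Ω : Type*} [MeasurableSpace Ω] {ℙ : Measure Ω} [IsProbabilityMeasure ℙ]
variable {p : ℝ≥0∞} [Fact (1 ≤ p)]

def Good (B : HSp d T → HTen d T) (ℙ : Measure Ω) (p : ℝ≥0∞) [Fact (1 ≤ p)]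
    (s t : ℝ) : Prop :=
  ∀ ψ : Lp (HSp d T) p ℙ, ∃! W : Lp (HSp d T) p ℙ,
    ∀ᵐ ω ∂ℙ, SolvesE d T B s t ((ψ : Ω → HSp d T) ω) ((W : Ω → HSp d T) ω)

lemma good_small (hB : AssumptionB1 d T B C₀) (hC₀ : 0 ≤ C₀)
    (hs : 0 ≤ s) (hst : s ≤ t) (ht : t ≤ T)
    (hsmall : Real.sqrt (t - s) * C₀ < 1) : Good (Ω := Ω) B ℙ p s t := by
  intro ψ
  set K := (Real.sqrt (t - s) * C₀).toNNReal with hKdef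
  have hK0 : 0 ≤ Real.sqrt (t - s) * C₀ := mul_nonneg (Real.sqrt_nonneg _) hC₀
  have hlip : LipschitzWith K (Phi hB hs hst ht ψ) := by
    apply LipschitzWith.of_dist_le_mul
    intro x y
    rw [dist_eq_norm, dist_eq_norm]
    refine le_trans (norm_Phi_sub_le hB hC₀ hs hst ht ψ x y) ?_
    rw [hKdef, Real.coe_toNNReal _ hK0]
  have hK : K < 1 := by
    rw [← NNReal.coe_lt_coe, Real.coe_toNNReal _ hK0, NNReal.coe_one]
    exact hsmall
  have hc : ContractingWith K (Phi hB hs hst ht ψ) := ⟨hK, hlip⟩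
  haveI : Nonempty (Lp (HSp d T) p ℙ) := ⟨0⟩
  refine ⟨ContractingWith.fixedPoint _ hc, ?_, ?_⟩
  · exact (Phi_fix_iff hB hs hst ht ψ _).2 hc.fixedPoint_isFixedPt
  · intro W hW
    exact hc.fixedPoint_unique ((Phi_fix_iff hB hs hst ht ψ W).1 hW)

lemma good_glue (hB : AssumptionB1 d T B C₀) (hs : 0 ≤ s) (hsu : s ≤ u) (hut : u ≤ t)
    (ht : t ≤ T) (Hl : Good (Ω := Ω) B ℙ p s u) (Hr : Good (Ω := Ω) B ℙ p u t) :
    Good (Ω := Ω) B ℙ p s t := by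
  intro ψ
  obtain ⟨W₁, hW₁, hW₁u⟩ := Hl ψ
  obtain ⟨W₂, hW₂, hW₂u⟩ := Hr W₁
  refine ⟨W₂, ?_, ?_⟩
  · filter_upwards [hW₁, hW₂] with ω h1 h2
    exact glue hB hs hsu hut ht _ _ _ h1 h2
  · intro W hW
    set W' := Phi hB hs hsu (hut.trans ht) ψ W with hW'def
    have hW'1 : ∀ᵐ ω ∂ℙ,
        SolvesE d T B s u ((ψ : Ω → HSp d T) ω) ((W' : Ω → HSp d T) ω) := by
      filter_upwards [hW, coeFn_Phi hB hs hsu (hut.trans ht) ψ W] with ω h1 h2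
      rw [h2]
      exact left_part hB hs hsu hut ht _ _ h1
    have hW'eq : W' = W₁ := hW₁u W' hW'1
    have hW2' : ∀ᵐ ω ∂ℙ,
        SolvesE d T B u t ((W₁ : Ω → HSp d T) ω) ((W : Ω → HSp d T) ω) := by
      have hcoe : (W' : Ω → HSp d T) =ᵐ[ℙ] (W₁ : Ω → HSp d T) := by rw [hW'eq]
      filter_upwards [hW, coeFn_Phi hB hs hsu (hut.trans ht) ψ W, hcoe] with ω h1 h2 h3
      have hr := right_part hB hs hsu hut ht _ _ h1
      rwa [show (ψ : Ω → HSp d T) ω + Fmap B hs hsu (hut.trans ht) ((W : Ω → HSp d T) ω) =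
        (W₁ : Ω → HSp d T) ω from h2.symm.trans h3] at hr
    exact hW₂u W hW2'

lemma good_of_pow (hB : AssumptionB1 d T B C₀) (hC₀ : 0 ≤ C₀) :
    ∀ n : ℕ, ∀ s t : ℝ, 0 ≤ s → s ≤ t → t ≤ T →
      C₀ ^ 2 * (t - s) ≤ (1/2) * 2 ^ n → Good (Ω := Ω) B ℙ p s t := by
  intro n
  induction n with
  | zero =>
    intro s t hs hst ht hsm
    apply good_small hB hC₀ hs hst ht
    have h1 : (Real.sqrt (t - s) * C₀) ^ 2 ≤ 1/2 := by
      rw [mul_pow, Real.sq_sqrt (by linarith : (0:ℝ) ≤ t - s)]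
      simp only [pow_zero, mul_one] at hsm
      nlinarith
    nlinarith [mul_nonneg (Real.sqrt_nonneg (t - s)) hC₀]
  | succ n ih =>
    intro s t hs hst ht hsm
    set u := (s + t) / 2 with hu
    have hsu : s ≤ u := by rw [hu]; linarith
    have hut : u ≤ t := by rw [hu]; linarith
    have hpow : (2:ℝ) ^ (n + 1) = 2 * 2 ^ n := by rw [pow_succ]; ring
    refine good_glue hB hs hsu hut ht (ih s u hs hsu (hut.trans ht) ?_) (ih u t (hs.trans hsu) hut ht ?_)
    · have : u - s = (t - s) / 2 := by rw [hu]; ring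
      rw [this]
      rw [hpow] at hsm
      nlinarith [sq_nonneg C₀]
    · have : t - u = (t - s) / 2 := by rw [hu]; ring
      rw [this]
      rw [hpow] at hsm
      nlinarith [sq_nonneg C₀]

end St5


/-- Under Assumption (B1), on a probability space `(Ω, F, ℙ)` and for `q ≥ 2`,
for every `0 ≤ s ≤ t ≤ T` and every `ψ ∈ L^q(Ω; H)` there exists a unique (up to `ℙ`-a.e.
equality) `w ∈ L^q(Ω; H)` such that for `ℙ`-a.e. `ω`, `w(ω)` solves `E(s,t,ψ(ω))`. -/
theorem statement5 (d : ℕ) (hd : 1 ≤ d) (T : ℝ) (hT : 0 < T)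
    (B : HSp d T → HTen d T) (C₀ : ℝ) (hC₀ : 0 < C₀)
    (hB : AssumptionB1 d T B C₀)
    (Ω : Type*) [MeasurableSpace Ω] (ℙ : Measure Ω) [IsProbabilityMeasure ℙ]
    (q : ℝ) (hq : 2 ≤ q) :
    ∀ s t : ℝ, 0 ≤ s → s ≤ t → t ≤ T →
      ∀ ψ : Lp (HSp d T) (ENNReal.ofReal q) ℙ,
        ∃! w : Lp (HSp d T) (ENNReal.ofReal q) ℙ,
          ∀ᵐ ω ∂ℙ,
            SolvesE d T B s t ((ψ : Ω → HSp d T) ω) ((w : Ω → HSp d T) ω) := by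
  haveI : Fact (1 ≤ ENNReal.ofReal q) := ⟨by
    rw [show (1:ℝ≥0∞) = ENNReal.ofReal 1 from ENNReal.ofReal_one.symm]
    exact ENNReal.ofReal_le_ofReal (by linarith)⟩
  intro s t hs hst ht ψ
  obtain ⟨n, hn⟩ := pow_unbounded_of_one_lt (R := ℝ) (C₀ ^ 2 * (t - s) * 2) _root_.one_lt_two
  exact St5.good_of_pow hB hC₀.le n s t hs hst ht (by linarith) ψ
end
end

section
/- Suppose B̄ satisfies Assumption (B1), and for 0 ≤ s ≤ t ≤ T let S_{s,t}(ψ) denote the unique solution in H of the Volterra fixed-point equation E(s,t,ψ). Then for every 0 ≤ s ≤ u ≤ t ≤ T and every ψ ∈ H: (i) the cocycle identity S_{s,t}(ψ) = S_{u,t}(S_{s,u}(ψ)) holds in H; (ii) S_{s,t}(ψ)(ξ) = S_{s,u}(ψ)(ξ) for a.e. ξ ∈ (0,u). -/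
open MeasureTheory

noncomputable section

namespace St6
open Set ENNReal MeasureTheory


variable {α : Type*} [MeasurableSpace α] {d : ℕ} {T : ℝ}
local notation "E'" => EuclideanSpace ℝ (Fin d)

lemma restrict_eq (T a b : ℝ) (ha : 0 ≤ a) (hb : b ≤ T) :
    Measure.restrict volume (Set.Ioc a b) = (fracMeas T).restrict (Set.Ioc a b) := by
  rw [Measure.restrict_restrict measurableSet_Ioc]
  refine Measure.restrict_congr_set ?_
  rw [MeasureTheory.ae_eq_set]
  constructor
  · refine measure_mono_null (fun r hr => ?_) (Real.volume_singleton (a := T))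
    simp only [Set.mem_diff, Set.mem_Ioc, Set.mem_inter_iff, Set.mem_Ioo,
      Set.mem_singleton_iff] at hr ⊢
    obtain ⟨⟨h1, h2⟩, h3⟩ := hr
    have hr0 : 0 < r := lt_of_le_of_lt ha h1
    have : ¬ r < T := fun h => h3 ⟨⟨h1, h2⟩, hr0, h⟩
    exact le_antisymm (h2.trans hb) (le_of_not_gt this)
  · refine measure_mono_null (fun r hr => ?_) (measure_empty (μ := volume))
    exact absurd hr.1.1 (fun h => hr.2 h)

lemma lint_sq_eq (ρ : Measure α) (f : α → E') :
    ∫⁻ x, (‖f x‖₊ : ℝ≥0∞) ^ 2 ∂ρ = (eLpNorm f 2 ρ) ^ 2 := by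
  rw [eLpNorm_eq_lintegral_rpow_enorm_toReal two_ne_zero ENNReal.ofNat_ne_top]
  rw [← ENNReal.rpow_natCast _ 2, ← ENNReal.rpow_mul]
  norm_num
  rfl

lemma cs_lintegral (ρ : Measure α) (f : α → ℝ≥0∞) (hf : AEMeasurable f ρ) :
    (∫⁻ x, f x ∂ρ) ^ 2 ≤ ρ Set.univ * ∫⁻ x, (f x) ^ 2 ∂ρ := by
  have hpq : Real.HolderConjugate 2 2 := Real.HolderConjugate.two_two
  have h := ENNReal.lintegral_mul_le_Lp_mul_Lq ρ hpq hf aemeasurable_const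
    (g := fun _ => (1 : ℝ≥0∞))
  simp only [Pi.mul_apply, mul_one, ENNReal.one_rpow, lintegral_const, one_mul] at h
  calc (∫⁻ x, f x ∂ρ) ^ 2
      ≤ ((∫⁻ x, f x ^ (2:ℝ) ∂ρ) ^ (1/(2:ℝ)) * (ρ univ) ^ (1/(2:ℝ))) ^ 2 :=
        pow_le_pow_left' h 2
    _ = (∫⁻ x, f x ^ (2:ℝ) ∂ρ) * ρ univ := by
        rw [mul_pow, ← ENNReal.rpow_natCast (_ ^ _) 2, ← ENNReal.rpow_natCast ((ρ univ) ^ _) 2,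
          ← ENNReal.rpow_mul, ← ENNReal.rpow_mul]
        norm_num
    _ = ρ univ * ∫⁻ x, (f x) ^ 2 ∂ρ := by
        rw [mul_comm]
        congr 1
        exact lintegral_congr fun x => by rw [← ENNReal.rpow_natCast _ 2]; norm_num

instance : IsFiniteMeasure (fracMeas T) := by
  constructor
  rw [Measure.restrict_apply_univ, Real.volume_Ioo]
  exact ENNReal.ofReal_lt_top

lemma meas_coe (f : HTen d T) : Measurable (f : ℝ × ℝ → E') :=
  (Lp.stronglyMeasurable f).measurable

lemma meas_coe1 (f : HSp d T) : Measurable (f : ℝ → E') :=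
  (Lp.stronglyMeasurable f).measurable

lemma ae_mem_Ioo : ∀ᵐ ξ ∂fracMeas T, ξ ∈ Set.Ioo 0 T := ae_restrict_mem measurableSet_Ioo

lemma ae_ne (c : ℝ) : ∀ᵐ ξ ∂fracMeas T, ξ ≠ c := by
  rw [ae_iff]
  refine measure_mono_null (fun x hx => ?_) (?_ : fracMeas T {c} = 0)
  · simpa using hx
  · exact le_antisymm ((Measure.restrict_le_self _).trans_eq (Real.volume_singleton)) zero_le

lemma double_lt_top (f : HTen d T) :
    ∫⁻ ξ, (∫⁻ r, (‖(f : ℝ × ℝ → E') (r, ξ)‖₊ : ℝ≥0∞) ^ 2 ∂fracMeas T) ∂fracMeas T < ⊤ := by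
  have hm : Measurable fun p : ℝ × ℝ => (‖(f : ℝ × ℝ → E') p‖₊ : ℝ≥0∞) ^ 2 :=
    ((meas_coe f).nnnorm.coe_nnreal_ennreal).pow_const 2
  rw [← MeasureTheory.lintegral_prod_symm _ hm.aemeasurable, lint_sq_eq]
  exact ENNReal.pow_lt_top (Lp.eLpNorm_lt_top f)

lemma slice_integrable (f : HTen d T) :
    ∀ᵐ ξ ∂fracMeas T, Integrable (fun r => (f : ℝ × ℝ → E') (r, ξ)) (fracMeas T) := by
  have hm : Measurable fun p : ℝ × ℝ => (‖(f : ℝ × ℝ → E') (p.2, p.1)‖₊ : ℝ≥0∞) ^ 2 :=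
    (((meas_coe f).comp measurable_swap).nnnorm.coe_nnreal_ennreal).pow_const 2
  have hmeasout : Measurable fun ξ =>
      ∫⁻ r, (‖(f : ℝ × ℝ → E') (r, ξ)‖₊ : ℝ≥0∞) ^ 2 ∂fracMeas T :=
    Measurable.lintegral_prod_right' hm
  have hae : ∀ᵐ ξ ∂fracMeas T,
      ∫⁻ r, (‖(f : ℝ × ℝ → E') (r, ξ)‖₊ : ℝ≥0∞) ^ 2 ∂fracMeas T < ⊤ :=
    ae_lt_top hmeasout (double_lt_top f).ne
  filter_upwards [hae] with ξ hξ
  have hmem : MemLp (fun r => (f : ℝ × ℝ → E') (r, ξ)) 2 (fracMeas T) := by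
    refine ⟨((meas_coe f).comp (measurable_prodMk_right)).aestronglyMeasurable, ?_⟩
    have h2 := lint_sq_eq (fracMeas T) (fun r => (f : ℝ × ℝ → E') (r, ξ))
    rw [lt_top_iff_ne_top]
    intro htop
    rw [htop] at h2
    have htop2 : ((⊤:ℝ≥0∞)) ^ (2:ℕ) = ⊤ := by simp
    rw [htop2] at h2
    exact absurd (h2 ▸ hξ) (lt_irrefl ⊤)
  exact hmem.integrable one_le_two

lemma volterra_slice (f : HTen d T)
    (h : ∀ᵐ p ∂(fracMeas T).prod (fracMeas T), p.2 < p.1 → (f : ℝ × ℝ → E') p = 0) :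
    ∀ᵐ ξ ∂fracMeas T, ∀ᵐ r ∂fracMeas T, ξ < r → (f : ℝ × ℝ → E') (r, ξ) = 0 := by
  have hms : MeasurableSet {p : ℝ × ℝ | p.2 < p.1 → (f : ℝ × ℝ → E') p = 0} := by
    have heq : {p : ℝ × ℝ | p.2 < p.1 → (f : ℝ × ℝ → E') p = 0}
        = {p : ℝ × ℝ | p.2 < p.1}ᶜ ∪ {p | (f : ℝ × ℝ → E') p = 0} := by
      ext p; simp [imp_iff_not_or]
    rw [heq]
    exact ((measurableSet_lt measurable_snd measurable_fst).compl).union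
      ((Lp.stronglyMeasurable f).measurableSet_eq_fun stronglyMeasurable_const)
  have h2 : ∀ᵐ r ∂fracMeas T, ∀ᵐ ξ ∂fracMeas T, (ξ < r → (f : ℝ × ℝ → E') (r, ξ) = 0) :=
    (Measure.ae_prod_iff_ae_ae hms).1 h
  exact (Measure.ae_ae_comm (p := fun r ξ => ξ < r → (f : ℝ × ℝ → E') (r, ξ) = 0) hms).1 h2

variable {B : HSp d T → HTen d T} {C₀ : ℝ}

lemma causal_slice (hB : AssumptionB1 d T B C₀) (w z : HSp d T) (σ : ℝ) (hσT : σ ≤ T)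
    (hag : ∀ᵐ ξ ∂fracMeas T, ξ < σ → (w : ℝ → E') ξ = (z : ℝ → E') ξ) :
    ∀ᵐ ξ ∂fracMeas T, ∀ᵐ r ∂fracMeas T, r < σ →
      (B w : ℝ × ℝ → E') (r, ξ) = (B z : ℝ × ℝ → E') (r, ξ) := by
  by_cases hσ0 : 0 < σ
  · have hc := hB.causal σ hσ0 hσT w z hag
    have hc' : ∀ᵐ r ∂fracMeas T, ∀ᵐ ξ ∂fracMeas T, (r < σ →
        (B w : ℝ × ℝ → E') (r, ξ) = (B z : ℝ × ℝ → E') (r, ξ)) := by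
      filter_upwards [hc] with r hr
      by_cases h : r < σ
      · filter_upwards [hr h] with ξ hξ _; exact hξ
      · exact Filter.Eventually.of_forall fun ξ hcon => absurd hcon h
    have hms : MeasurableSet {p : ℝ × ℝ | p.1 < σ →
        (B w : ℝ × ℝ → E') (p.1, p.2) = (B z : ℝ × ℝ → E') (p.1, p.2)} := by
      have heq : {p : ℝ × ℝ | p.1 < σ →
          (B w : ℝ × ℝ → E') (p.1, p.2) = (B z : ℝ × ℝ → E') (p.1, p.2)}
          = {p : ℝ × ℝ | p.1 < σ}ᶜ ∪
            {p : ℝ × ℝ | (B w : ℝ × ℝ → E') p = (B z : ℝ × ℝ → E') p} := by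
        ext p; simp [imp_iff_not_or]
      rw [heq]
      exact ((measurableSet_lt measurable_fst measurable_const).compl).union
        ((Lp.stronglyMeasurable (B w)).measurableSet_eq_fun (Lp.stronglyMeasurable (B z)))
    exact (Measure.ae_ae_comm (p := fun r ξ => r < σ →
      (B w : ℝ × ℝ → E') (r, ξ) = (B z : ℝ × ℝ → E') (r, ξ)) hms).1 hc'
  · refine Filter.Eventually.of_forall fun ξ => ?_
    filter_upwards [ae_mem_Ioo (T := T)] with r hr hcon
    exact absurd (hcon.trans_le (le_of_not_gt hσ0)) (not_lt.2 hr.1.le)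

lemma agree_int (hB : AssumptionB1 d T B C₀) (w z : HSp d T) (σ a b : ℝ)
    (hb : b ≤ σ) (hσT : σ ≤ T)
    (hag : ∀ᵐ ξ ∂fracMeas T, ξ < σ → (w : ℝ → E') ξ = (z : ℝ → E') ξ) :
    ∀ᵐ ξ ∂fracMeas T,
      ∫ r in Set.Ioc a b, (B w : ℝ × ℝ → E') (r, ξ) ∂fracMeas T
        = ∫ r in Set.Ioc a b, (B z : ℝ × ℝ → E') (r, ξ) ∂fracMeas T := by
  filter_upwards [causal_slice hB w z σ hσT hag] with ξ hc
  refine integral_congr_ae ?_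
  filter_upwards [ae_restrict_of_ae hc, ae_restrict_of_ae (ae_ne (T := T) σ),
    ae_restrict_mem measurableSet_Ioc] with r hr hne hmem
  exact hr (lt_of_le_of_ne (hmem.2.trans hb) hne)


lemma step (hT : 0 < T) (hC₀ : 0 < C₀) (hB : AssumptionB1 d T B C₀)
    (w z : HSp d T) (s t₁ t₂ u σ δ : ℝ)
    (hδ : 0 < δ) (hsmall : ENNReal.ofReal δ * (ENNReal.ofReal C₀) ^ 2 < 1)
    (hσ0 : 0 ≤ σ) (hσu : σ ≤ u) (hu : u ≤ T) (ht₁ : u ≤ t₁) (ht₂ : u ≤ t₂)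
    (heq : ∀ᵐ ξ ∂fracMeas T, ξ < u →
      (w : ℝ → E') ξ - (z : ℝ → E') ξ =
        (∫ r in Set.Ioc s t₁, (B w : ℝ × ℝ → E') (r, ξ) ∂fracMeas T) -
        ∫ r in Set.Ioc s t₂, (B z : ℝ × ℝ → E') (r, ξ) ∂fracMeas T)
    (hag : ∀ᵐ ξ ∂fracMeas T, ξ < σ → (w : ℝ → E') ξ = (z : ℝ → E') ξ) :
    ∀ᵐ ξ ∂fracMeas T, ξ < min (σ + δ) u → (w : ℝ → E') ξ = (z : ℝ → E') ξ := by
  classical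
  set τ := min (σ + δ) u with hτdef
  rcases le_or_gt τ 0 with hτneg | hτ0
  · filter_upwards [ae_mem_Ioo (T := T)] with ξ hξ h
    exact absurd (h.trans_le hτneg) (not_lt.2 hξ.1.le)
  have hτu : τ ≤ u := min_le_right _ _
  have hτT : τ ≤ T := hτu.trans hu
  have hστ : σ ≤ τ := le_min (le_add_of_nonneg_right hδ.le) hσu
  -- the modified function m
  set m₀ : ℝ → E' := fun ξ => if ξ < τ then (w : ℝ → E') ξ else (z : ℝ → E') ξ with hm₀
  have hm₀eq : m₀ = (Set.Iio τ).indicator (w : ℝ → E') +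
      (Set.Iio τ)ᶜ.indicator (z : ℝ → E') := by
    funext ξ
    by_cases h : ξ < τ
    · simp [hm₀, h, Set.indicator_apply, Set.mem_Iio]
    · simp [hm₀, h, Set.indicator_apply, Set.mem_Iio, not_lt.1 h]
  have hm₀mem : MemLp m₀ 2 (fracMeas T) := by
    rw [hm₀eq]
    exact ((Lp.memLp w).indicator measurableSet_Iio).add
      ((Lp.memLp z).indicator measurableSet_Iio.compl)
  set m : HSp d T := hm₀mem.toLp m₀ with hm
  have hmcoe : (m : ℝ → E') =ᵐ[fracMeas T] m₀ := hm₀mem.coeFn_toLp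
  have hwm : ∀ᵐ ξ ∂fracMeas T, ξ < τ → (w : ℝ → E') ξ = (m : ℝ → E') ξ := by
    filter_upwards [hmcoe] with ξ h hlt
    rw [h]; simp [hm₀, hlt]
  have hCm := hB.causal τ hτ0 hτT w m hwm
  have hCσ := causal_slice hB w z σ (hσu.trans hu) hag
  have hVw := volterra_slice (B w) (hB.volterra w)
  have hVz := volterra_slice (B z) (hB.volterra z)
  set F : ℝ × ℝ → E' := (B w : ℝ × ℝ → E') with hF
  set G : ℝ × ℝ → E' := (B z : ℝ × ℝ → E') with hG
  set M : ℝ × ℝ → E' := (B m : ℝ × ℝ → E') with hM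
  set e : ℝ → ℝ≥0∞ := fun ξ => (‖(w : ℝ → E') ξ - (z : ℝ → E') ξ‖₊ : ℝ≥0∞) ^ 2 with he
  have hemeas : Measurable e :=
    (((meas_coe1 w).sub (meas_coe1 z)).nnnorm.coe_nnreal_ennreal).pow_const 2
  set φ : ℝ≥0∞ := ∫⁻ ξ in Set.Iio τ, e ξ ∂fracMeas T with hφ
  have hFGmeas : Measurable fun p : ℝ × ℝ => (‖F p - G p‖₊ : ℝ≥0∞) :=
    ((meas_coe (B w)).sub (meas_coe (B z))).nnnorm.coe_nnreal_ennreal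
  -- Claim 1
  have claim1 : ∀ᵐ ξ ∂fracMeas T, ξ ∈ Set.Iio τ →
      e ξ ≤ ENNReal.ofReal δ *
        ∫⁻ r in Set.Ioc σ τ, (‖F (r, ξ) - G (r, ξ)‖₊ : ℝ≥0∞) ^ 2 ∂fracMeas T := by
    filter_upwards [heq, hCσ, hVw, hVz, slice_integrable (B w), slice_integrable (B z)]
      with ξ hξeq hξC hξVw hξVz hiF hiG hξτ
    have hξτ' : ξ < τ := hξτ
    have hξu : ξ < u := lt_of_lt_of_le hξτ' hτu
    have heqξ := hξeq hξu
    -- truncation of the two integrals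
    have htrunc : ∀ t' : ℝ, ξ ≤ t' → ∀ h : ℝ × ℝ → E',
        (∀ᵐ r ∂fracMeas T, ξ < r → h (r, ξ) = 0) →
        Integrable (fun r => h (r, ξ)) (fracMeas T) →
        ∫ r in Set.Ioc s t', h (r, ξ) ∂fracMeas T
          = ∫ r in Set.Ioc s ξ, h (r, ξ) ∂fracMeas T := by
      intro t' hξt' h hv hint
      have h1 : ∀ᵐ r ∂(fracMeas T).restrict (Set.Ioc s t'),
          h (r, ξ) = (Set.Ioc s ξ).indicator (fun r => h (r, ξ)) r := by
        filter_upwards [ae_restrict_of_ae hv, ae_restrict_mem measurableSet_Ioc]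
          with r h0 hmem
        by_cases hrξ : r ≤ ξ
        · rw [Set.indicator_of_mem (Set.mem_Ioc.mpr ⟨hmem.1, hrξ⟩)]
        · rw [Set.indicator_of_notMem (fun hc => hrξ hc.2), h0 (lt_of_not_ge hrξ)]
      rw [integral_congr_ae h1, setIntegral_indicator measurableSet_Ioc,
        Set.inter_eq_self_of_subset_right (Set.Ioc_subset_Ioc_right hξt')]
    rw [htrunc t₁ (hξu.le.trans ht₁) F hξVw hiF,
        htrunc t₂ (hξu.le.trans ht₂) G hξVz hiG] at heqξ
    have hiF' : Integrable (fun r => F (r, ξ)) ((fracMeas T).restrict (Set.Ioc s ξ)) :=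
      hiF.restrict
    have hiG' : Integrable (fun r => G (r, ξ)) ((fracMeas T).restrict (Set.Ioc s ξ)) :=
      hiG.restrict
    have heq2 : (w : ℝ → E') ξ - (z : ℝ → E') ξ
        = ∫ r in Set.Ioc s ξ, (F (r, ξ) - G (r, ξ)) ∂fracMeas T := by
      rw [integral_sub hiF' hiG']; exact heqξ
    have heq3 : (w : ℝ → E') ξ - (z : ℝ → E') ξ
        = ∫ r in Set.Ioc s ξ ∩ Set.Ioi σ, (F (r, ξ) - G (r, ξ)) ∂fracMeas T := by
      rw [heq2]
      have h1 : ∀ᵐ r ∂(fracMeas T).restrict (Set.Ioc s ξ),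
          F (r, ξ) - G (r, ξ)
            = (Set.Ioi σ).indicator (fun r => F (r, ξ) - G (r, ξ)) r := by
        filter_upwards [ae_restrict_of_ae hξC, ae_restrict_of_ae (ae_ne (T := T) σ)]
          with r hC hne
        by_cases hrσ : σ < r
        · rw [Set.indicator_of_mem (Set.mem_Ioi.mpr hrσ)]
        · rw [Set.indicator_of_notMem (fun hmem => hrσ (Set.mem_Ioi.mp hmem)),
            hC (lt_of_le_of_ne (not_lt.1 hrσ) hne), sub_self]
      rw [integral_congr_ae h1, setIntegral_indicator measurableSet_Ioi]
    have hsub : Set.Ioc s ξ ∩ Set.Ioi σ ⊆ Set.Ioc σ τ :=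
      fun r hr => ⟨hr.2, hr.1.2.trans hξτ'.le⟩
    have hbound : (‖(w : ℝ → E') ξ - (z : ℝ → E') ξ‖₊ : ℝ≥0∞)
        ≤ ∫⁻ r in Set.Ioc σ τ, (‖F (r, ξ) - G (r, ξ)‖₊ : ℝ≥0∞) ∂fracMeas T := by
      rw [heq3]
      refine le_trans (enorm_integral_le_lintegral_enorm _) ?_
      exact lintegral_mono_set hsub
    have hmeasure : (fracMeas T).restrict (Set.Ioc σ τ) Set.univ ≤ ENNReal.ofReal δ := by
      rw [Measure.restrict_apply_univ, Measure.restrict_apply measurableSet_Ioc]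
      refine le_trans (measure_mono Set.inter_subset_left) ?_
      rw [Real.volume_Ioc]
      exact ENNReal.ofReal_le_ofReal (by linarith [min_le_left (σ + δ) u])
    calc e ξ ≤ (∫⁻ r in Set.Ioc σ τ, (‖F (r, ξ) - G (r, ξ)‖₊ : ℝ≥0∞) ∂fracMeas T) ^ 2 :=
          pow_le_pow_left' hbound 2
      _ ≤ ((fracMeas T).restrict (Set.Ioc σ τ) Set.univ) *
            ∫⁻ r in Set.Ioc σ τ, (‖F (r, ξ) - G (r, ξ)‖₊ : ℝ≥0∞) ^ 2 ∂fracMeas T :=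
          cs_lintegral _ _ (hFGmeas.comp measurable_prodMk_right).aemeasurable
      _ ≤ ENNReal.ofReal δ *
            ∫⁻ r in Set.Ioc σ τ, (‖F (r, ξ) - G (r, ξ)‖₊ : ℝ≥0∞) ^ 2 ∂fracMeas T :=
          mul_le_mul_left hmeasure _
  -- the double integral swap and Lipschitz bound
  have huncmeas : Measurable fun p : ℝ × ℝ => (‖F (p.2, p.1) - G (p.2, p.1)‖₊ : ℝ≥0∞) ^ 2 :=
    ((hFGmeas.comp measurable_swap).pow_const 2)
  have hMGmeas : Measurable fun p : ℝ × ℝ => (‖M p - G p‖₊ : ℝ≥0∞) ^ 2 :=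
    (((meas_coe (B m)).sub (meas_coe (B z))).nnnorm.coe_nnreal_ennreal).pow_const 2
  have hφle : φ ≤ ENNReal.ofReal δ * ((ENNReal.ofReal C₀) ^ 2 * φ) := by
    have step1 : φ ≤ ENNReal.ofReal δ *
        ∫⁻ ξ in Set.Iio τ,
          (∫⁻ r in Set.Ioc σ τ, (‖F (r, ξ) - G (r, ξ)‖₊ : ℝ≥0∞) ^ 2 ∂fracMeas T)
          ∂fracMeas T := by
      rw [← lintegral_const_mul' _ _ ENNReal.ofReal_ne_top]
      have claim1' : ∀ᵐ ξ ∂(fracMeas T).restrict (Set.Iio τ),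
          e ξ ≤ ENNReal.ofReal δ *
            ∫⁻ r in Set.Ioc σ τ, (‖F (r, ξ) - G (r, ξ)‖₊ : ℝ≥0∞) ^ 2 ∂fracMeas T := by
        rw [ae_restrict_iff' measurableSet_Iio]
        exact claim1
      exact lintegral_mono_ae claim1'
    have step2 : ∫⁻ ξ in Set.Iio τ,
          (∫⁻ r in Set.Ioc σ τ, (‖F (r, ξ) - G (r, ξ)‖₊ : ℝ≥0∞) ^ 2 ∂fracMeas T)
          ∂fracMeas T
        ≤ ∫⁻ r in Set.Ioc σ τ,
            (∫⁻ ξ, (‖F (r, ξ) - G (r, ξ)‖₊ : ℝ≥0∞) ^ 2 ∂fracMeas T) ∂fracMeas T := by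
      refine le_trans (setLIntegral_le_lintegral _ _) (le_of_eq ?_)
      exact lintegral_lintegral_swap
        (f := fun ξ r => (‖F (r, ξ) - G (r, ξ)‖₊ : ℝ≥0∞) ^ 2)
        (μ := fracMeas T) (ν := (fracMeas T).restrict (Set.Ioc σ τ))
        huncmeas.aemeasurable
    have step3 : ∫⁻ r in Set.Ioc σ τ,
          (∫⁻ ξ, (‖F (r, ξ) - G (r, ξ)‖₊ : ℝ≥0∞) ^ 2 ∂fracMeas T) ∂fracMeas T
        = ∫⁻ r in Set.Ioc σ τ,
            (∫⁻ ξ, (‖M (r, ξ) - G (r, ξ)‖₊ : ℝ≥0∞) ^ 2 ∂fracMeas T) ∂fracMeas T := by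
      refine lintegral_congr_ae ?_
      filter_upwards [ae_restrict_of_ae hCm, ae_restrict_of_ae (ae_ne (T := T) τ),
        ae_restrict_mem measurableSet_Ioc] with r hr hne hmem
      have hrτ : r < τ := lt_of_le_of_ne hmem.2 hne
      refine lintegral_congr_ae ?_
      filter_upwards [hr hrτ] with ξ hξ
      rw [hξ]
    have step4 : ∫⁻ r in Set.Ioc σ τ,
          (∫⁻ ξ, (‖M (r, ξ) - G (r, ξ)‖₊ : ℝ≥0∞) ^ 2 ∂fracMeas T) ∂fracMeas T
        ≤ (eLpNorm ((B m : ℝ × ℝ → E') - (B z : ℝ × ℝ → E')) 2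
            ((fracMeas T).prod (fracMeas T))) ^ 2 := by
      refine le_trans (setLIntegral_le_lintegral _ _) ?_
      rw [← MeasureTheory.lintegral_prod _ hMGmeas.aemeasurable]
      rw [← lint_sq_eq]
      exact le_of_eq (lintegral_congr fun p => rfl)
    have step5 : (eLpNorm ((B m : ℝ × ℝ → E') - (B z : ℝ × ℝ → E')) 2
          ((fracMeas T).prod (fracMeas T))) ^ 2 ≤ (ENNReal.ofReal C₀) ^ 2 * φ := by
      have hcoe : ((B m : ℝ × ℝ → E') - (B z : ℝ × ℝ → E'))
          =ᵐ[(fracMeas T).prod (fracMeas T)] (B m - B z : HTen d T) :=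
        (Lp.coeFn_sub (B m) (B z)).symm
      rw [eLpNorm_congr_ae hcoe]
      have h1 : eLpNorm (B m - B z : HTen d T) 2 ((fracMeas T).prod (fracMeas T))
          = ENNReal.ofReal ‖(B m - B z : HTen d T)‖ := by
        rw [Lp.norm_def, ENNReal.ofReal_toReal (Lp.eLpNorm_ne_top _)]
      rw [h1]
      have h2 : ENNReal.ofReal ‖(B m - B z : HTen d T)‖
          ≤ ENNReal.ofReal C₀ * ENNReal.ofReal ‖(m - z : HSp d T)‖ := by
        rw [← ENNReal.ofReal_mul hC₀.le]
        exact ENNReal.ofReal_le_ofReal (hB.lipschitz m z)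
      have h3 : (ENNReal.ofReal ‖(m - z : HSp d T)‖) ^ 2 = φ := by
        have h4 : ENNReal.ofReal ‖(m - z : HSp d T)‖
            = eLpNorm ((m - z : HSp d T) : ℝ → E') 2 (fracMeas T) := by
          rw [Lp.norm_def, ENNReal.ofReal_toReal (Lp.eLpNorm_ne_top _)]
        rw [h4, ← lint_sq_eq]
        have h5 : ∀ᵐ ξ ∂fracMeas T,
            (‖((m - z : HSp d T) : ℝ → E') ξ‖₊ : ℝ≥0∞) ^ 2
              = (Set.Iio τ).indicator e ξ := by
          filter_upwards [Lp.coeFn_sub m z, hmcoe] with ξ h6 h7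
          rw [h6]
          simp only [Pi.sub_apply]
          rw [h7]
          by_cases hlt : ξ < τ
          · rw [Set.indicator_of_mem (Set.mem_Iio.mpr hlt)]
            simp [hm₀, hlt, he]
          · rw [Set.indicator_of_notMem (fun hmem => hlt (Set.mem_Iio.mp hmem))]
            simp [hm₀, hlt]
        rw [lintegral_congr_ae h5, lintegral_indicator measurableSet_Iio]
      calc (ENNReal.ofReal ‖(B m - B z : HTen d T)‖) ^ 2
          ≤ (ENNReal.ofReal C₀ * ENNReal.ofReal ‖(m - z : HSp d T)‖) ^ 2 :=
            pow_le_pow_left' h2 2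
        _ = (ENNReal.ofReal C₀) ^ 2 * (ENNReal.ofReal ‖(m - z : HSp d T)‖) ^ 2 :=
            mul_pow _ _ 2
        _ = (ENNReal.ofReal C₀) ^ 2 * φ := by rw [h3]
    calc φ ≤ ENNReal.ofReal δ *
          ∫⁻ ξ in Set.Iio τ,
            (∫⁻ r in Set.Ioc σ τ, (‖F (r, ξ) - G (r, ξ)‖₊ : ℝ≥0∞) ^ 2 ∂fracMeas T)
            ∂fracMeas T := step1
      _ ≤ ENNReal.ofReal δ * ((ENNReal.ofReal C₀) ^ 2 * φ) := by
          refine mul_le_mul_right ?_ _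
          exact le_trans step2 (le_trans (le_of_eq step3) (le_trans step4 step5))
  -- conclude φ = 0
  have hφfin : φ < ⊤ := by
    refine lt_of_le_of_lt (setLIntegral_le_lintegral _ _) ?_
    have hcongr : ∀ᵐ ξ ∂fracMeas T,
        e ξ = (‖((w - z : HSp d T) : ℝ → E') ξ‖₊ : ℝ≥0∞) ^ 2 := by
      filter_upwards [Lp.coeFn_sub w z] with ξ h
      rw [he]; simp only [h, Pi.sub_apply]
    rw [lintegral_congr_ae hcongr, lint_sq_eq]
    exact ENNReal.pow_lt_top (Lp.eLpNorm_lt_top _)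
  have hφ0 : φ = 0 := by
    by_contra h0
    have h1 : (ENNReal.ofReal δ * (ENNReal.ofReal C₀) ^ 2) * φ < 1 * φ :=
      ENNReal.mul_lt_mul_left h0 hφfin.ne hsmall
    rw [one_mul, mul_assoc] at h1
    exact absurd (lt_of_le_of_lt hφle h1) (lt_irrefl φ)
  have hae : ∀ᵐ ξ ∂fracMeas T, ξ ∈ Set.Iio τ → e ξ = 0 := by
    have := (lintegral_eq_zero_iff hemeas).1 hφ0
    exact (ae_restrict_iff' measurableSet_Iio).1 this
  filter_upwards [hae] with ξ h hlt
  have h2 := h hlt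
  rw [he] at h2
  rw [pow_eq_zero_iff two_ne_zero, ENNReal.coe_eq_zero, nnnorm_eq_zero, sub_eq_zero] at h2
  exact h2

lemma key (hT : 0 < T) (hC₀ : 0 < C₀) (hB : AssumptionB1 d T B C₀)
    (w z : HSp d T) (s t₁ t₂ u : ℝ) (hu : u ≤ T) (ht₁ : u ≤ t₁) (ht₂ : u ≤ t₂)
    (heq : ∀ᵐ ξ ∂fracMeas T, ξ < u →
      (w : ℝ → E') ξ - (z : ℝ → E') ξ =
        (∫ r in Set.Ioc s t₁, (B w : ℝ × ℝ → E') (r, ξ) ∂fracMeas T) -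
        ∫ r in Set.Ioc s t₂, (B z : ℝ × ℝ → E') (r, ξ) ∂fracMeas T) :
    ∀ᵐ ξ ∂fracMeas T, ξ < u → (w : ℝ → E') ξ = (z : ℝ → E') ξ := by
  set δ : ℝ := (2 * C₀ ^ 2)⁻¹ with hδdef
  have hδ : 0 < δ := by positivity
  have hsmall : ENNReal.ofReal δ * (ENNReal.ofReal C₀) ^ 2 < 1 := by
    rw [← ENNReal.ofReal_pow hC₀.le, ← ENNReal.ofReal_mul hδ.le]
    have hval : δ * C₀ ^ 2 = 1 / 2 := by
      rw [hδdef]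
      field_simp
    rw [hval]
    exact ENNReal.ofReal_lt_one.2 (by norm_num)
  rcases le_or_gt u 0 with hu0 | hu0
  · filter_upwards [ae_mem_Ioo (T := T)] with ξ hξ h
    exact absurd (h.trans_le hu0) (not_lt.2 hξ.1.le)
  have main : ∀ n : ℕ, ∀ᵐ ξ ∂fracMeas T, ξ < min (n * δ) u →
      (w : ℝ → E') ξ = (z : ℝ → E') ξ := by
    intro n
    induction n with
    | zero =>
      filter_upwards [ae_mem_Ioo (T := T)] with ξ hξ h
      have h0 : ξ < 0 := lt_of_lt_of_le h (by simp)
      exact absurd h0 (not_lt.2 hξ.1.le)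
    | succ n ih =>
      have hstep := step hT hC₀ hB w z s t₁ t₂ u (min (n * δ) u) δ hδ hsmall
        (le_min (by positivity) hu0.le) (min_le_right _ _) hu ht₁ ht₂ heq ih
      have hmono : min ((n + 1 : ℕ) * δ) u ≤ min (min ((n : ℝ) * δ) u + δ) u := by
        refine le_min ?_ (min_le_right _ _)
        rcases le_total ((n : ℝ) * δ) u with h | h
        · rw [min_eq_left h]
          refine le_trans (min_le_left _ _) (le_of_eq ?_)
          push_cast
          ring
        · rw [min_eq_right h]
          exact (min_le_right _ _).trans (le_add_of_nonneg_right hδ.le)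
      filter_upwards [hstep] with ξ h hlt
      exact h (lt_of_lt_of_le hlt hmono)
  obtain ⟨n, hn⟩ := exists_nat_ge (u / δ)
  have hnu : u ≤ n * δ := by
    rw [div_le_iff₀ hδ] at hn
    linarith
  filter_upwards [main n] with ξ h hξu
  exact h (lt_min (lt_of_lt_of_le hξu hnu) hξu)

lemma int_conv (a b : ℝ) (ha : 0 ≤ a) (hb : b ≤ T) (f : ℝ → E') :
    ∫ r in Set.Ioc a b, f r = ∫ r in Set.Ioc a b, f r ∂fracMeas T := by
  rw [← restrict_eq T a b ha hb]

end St6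


/-- Under Assumption (B1), if `S_{s,t}(ψ)` denotes the (unique) solution of the
Volterra fixed-point equation `E(s,t,ψ)`, then for `0 ≤ s ≤ u ≤ t ≤ T` and `ψ ∈ H`:
(i) the cocycle identity `S_{s,t}(ψ) = S_{u,t}(S_{s,u}(ψ))` holds in `H`;
(ii) `S_{s,t}(ψ)(ξ) = S_{s,u}(ψ)(ξ)` for a.e. `ξ ∈ (0,u)`. -/
theorem statement6 (d : ℕ) (hd : 1 ≤ d) (T : ℝ) (hT : 0 < T)
    (B : HSp d T → HTen d T) (C₀ : ℝ) (hC₀ : 0 < C₀)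
    (hB : AssumptionB1 d T B C₀)
    (S : ℝ → ℝ → HSp d T → HSp d T)
    (hS : ∀ s t : ℝ, 0 ≤ s → s ≤ t → t ≤ T →
      ∀ ψ : HSp d T, SolvesE d T B s t ψ (S s t ψ)) :
    ∀ s u t : ℝ, 0 ≤ s → s ≤ u → u ≤ t → t ≤ T →
      ∀ ψ : HSp d T,
        S s t ψ = S u t (S s u ψ) ∧
        (∀ᵐ ξ ∂fracMeas T, ξ < u →
          (S s t ψ : ℝ → EuclideanSpace ℝ (Fin d)) ξ =
            (S s u ψ : ℝ → EuclideanSpace ℝ (Fin d)) ξ) := by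
  intro s u t hs hsu hut htT ψ
  classical
  have hsT : s ≤ T := hsu.trans (hut.trans htT)
  have huT : u ≤ T := hut.trans htT
  have hu0 : 0 ≤ u := hs.trans hsu
  have ht0 : 0 ≤ t := hu0.trans hut
  set w : HSp d T := S s t ψ with hwdef
  set v : HSp d T := S s u ψ with hvdef
  set z : HSp d T := S u t v with hzdef
  have hw := hS s t hs (hsu.trans hut) htT ψ
  have hv := hS s u hs hsu huT ψ
  have hz := hS u t hu0 hut htT v
  rw [SolvesE] at hw hv hz
  -- convert to fracMeas integrals
  have hwμ : ∀ᵐ ξ ∂fracMeas T, (w : ℝ → EuclideanSpace ℝ (Fin d)) ξ =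
      (ψ : ℝ → EuclideanSpace ℝ (Fin d)) ξ +
        ∫ r in Set.Ioc s t, (B w : ℝ × ℝ → EuclideanSpace ℝ (Fin d)) (r, ξ) ∂fracMeas T := by
    filter_upwards [hw] with ξ h
    rw [h, St6.int_conv s t hs htT]
  have hvμ : ∀ᵐ ξ ∂fracMeas T, (v : ℝ → EuclideanSpace ℝ (Fin d)) ξ =
      (ψ : ℝ → EuclideanSpace ℝ (Fin d)) ξ +
        ∫ r in Set.Ioc s u, (B v : ℝ × ℝ → EuclideanSpace ℝ (Fin d)) (r, ξ) ∂fracMeas T := by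
    filter_upwards [hv] with ξ h
    rw [h, St6.int_conv s u hs huT]
  have hzμ : ∀ᵐ ξ ∂fracMeas T, (z : ℝ → EuclideanSpace ℝ (Fin d)) ξ =
      (v : ℝ → EuclideanSpace ℝ (Fin d)) ξ +
        ∫ r in Set.Ioc u t, (B z : ℝ × ℝ → EuclideanSpace ℝ (Fin d)) (r, ξ) ∂fracMeas T := by
    filter_upwards [hz] with ξ h
    rw [h, St6.int_conv u t hu0 htT]
  -- part (ii)
  have hii : ∀ᵐ ξ ∂fracMeas T, ξ < u →
      (w : ℝ → EuclideanSpace ℝ (Fin d)) ξ = (v : ℝ → EuclideanSpace ℝ (Fin d)) ξ := by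
    refine St6.key hT hC₀ hB w v s t u u huT hut le_rfl ?_
    filter_upwards [hwμ, hvμ] with ξ h1 h2 _
    rw [h1, h2, add_sub_add_left_eq_sub]
  -- the equation satisfied by w on (u,t]
  have hagree := St6.agree_int hB w v u s u le_rfl huT hii
  have hw2 : ∀ᵐ ξ ∂fracMeas T, (w : ℝ → EuclideanSpace ℝ (Fin d)) ξ =
      (v : ℝ → EuclideanSpace ℝ (Fin d)) ξ +
        ∫ r in Set.Ioc u t, (B w : ℝ × ℝ → EuclideanSpace ℝ (Fin d)) (r, ξ) ∂fracMeas T := by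
    filter_upwards [hwμ, hvμ, hagree, St6.slice_integrable (B w)] with ξ h1 h2 h3 hint
    have hsplit : ∫ r in Set.Ioc s t, (B w : ℝ × ℝ → EuclideanSpace ℝ (Fin d)) (r, ξ) ∂fracMeas T
        = (∫ r in Set.Ioc s u, (B w : ℝ × ℝ → EuclideanSpace ℝ (Fin d)) (r, ξ) ∂fracMeas T)
          + ∫ r in Set.Ioc u t, (B w : ℝ × ℝ → EuclideanSpace ℝ (Fin d)) (r, ξ) ∂fracMeas T := by
      rw [← Set.Ioc_union_Ioc_eq_Ioc hsu hut,
        setIntegral_union (Set.Ioc_disjoint_Ioc_of_le le_rfl) measurableSet_Ioc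
          hint.integrableOn hint.integrableOn]
    rw [h1, hsplit, h3, ← add_assoc, ← h2]
  -- both w and z solve the equation on (u,t]; apply key at level t
  have hwz : ∀ᵐ ξ ∂fracMeas T, ξ < t →
      (w : ℝ → EuclideanSpace ℝ (Fin d)) ξ = (z : ℝ → EuclideanSpace ℝ (Fin d)) ξ := by
    refine St6.key hT hC₀ hB w z u t t t htT le_rfl le_rfl ?_
    filter_upwards [hw2, hzμ] with ξ h1 h2 _
    rw [h1, h2, add_sub_add_left_eq_sub]
  have hfin := St6.agree_int hB w z t u t le_rfl htT hwz
  have hae : (w : ℝ → EuclideanSpace ℝ (Fin d)) =ᵐ[fracMeas T]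
      (z : ℝ → EuclideanSpace ℝ (Fin d)) := by
    filter_upwards [hw2, hzμ, hfin] with ξ h1 h2 h3
    rw [h1, h3, ← h2]
  exact ⟨Lp.ext hae, hii⟩
end
end

section
/- Let E and F be Banach spaces, Λ a dense linear subspace of E, and γ ∈ (0,1]. Let B : E → F be continuous and D : E → ℒ(E; F) satisfy ‖D(w₁) − D(w₂)‖_{ℒ(E;F)} ≤ C‖w₁ − w₂‖^γ for all w₁, w₂ ∈ E and some constant C ≥ 0. Assume that for all w, h ∈ Λ the Taylor identity B(w + h) − B(w) = ∫₀¹ D(w + θh)(h) dθ holds. Then B is Fréchet differentiable at every point of E with Fréchet derivative D, and moreover ‖B(w₂) − B(w₁) − D(w₁)(w₂ − w₁)‖ ≤ (C/(γ+1))·‖w₂ − w₁‖^{1+γ} for all w₁, w₂ ∈ E. -/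
open MeasureTheory intervalIntegral

/-- Extension of the Fréchet differential from a dense subspace: if
`B : E → F` is continuous, `D : E → ℒ(E;F)` is `γ`-Hölder continuous, and the Taylor identity
`B(w+h) − B(w) = ∫₀¹ D(w+θh)(h) dθ` holds for `w, h` in a dense linear subspace `Λ`, then `B` is
Fréchet differentiable on all of `E` with derivative `D`, with the quantitative Taylor remainder
bound `‖B(w₂) − B(w₁) − D(w₁)(w₂−w₁)‖ ≤ (C/(γ+1)) ‖w₂−w₁‖^(1+γ)`. -/
theorem statement9 (E F : Type*)
    [NormedAddCommGroup E] [NormedSpace ℝ E] [CompleteSpace E]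
    [NormedAddCommGroup F] [NormedSpace ℝ F] [CompleteSpace F]
    (Λ : Submodule ℝ E) (hΛ : Dense (Λ : Set E))
    (γ : ℝ) (hγ0 : 0 < γ) (hγ1 : γ ≤ 1)
    (B : E → F) (hB : Continuous B)
    (D : E → E →L[ℝ] F) (C : ℝ) (hC : 0 ≤ C)
    (hD : ∀ w₁ w₂ : E, ‖D w₁ - D w₂‖ ≤ C * ‖w₁ - w₂‖ ^ γ)
    (hTaylor : ∀ w h : E, w ∈ Λ → h ∈ Λ →
      B (w + h) - B w = ∫ θ in (0 : ℝ)..1, (D (w + θ • h)) h) :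
    (∀ w : E, HasFDerivAt B (D w) w) ∧
      ∀ w₁ w₂ : E,
        ‖B w₂ - B w₁ - D w₁ (w₂ - w₁)‖ ≤ (C / (γ + 1)) * ‖w₂ - w₁‖ ^ (1 + γ) := by
  have hγ1' : (0:ℝ) < γ + 1 := by linarith
  -- `D` is continuous
  have hDcont : Continuous D := by
    rw [continuous_iff_continuousAt]
    intro w
    rw [ContinuousAt, tendsto_iff_norm_sub_tendsto_zero]
    have hlim : Filter.Tendsto (fun x : E => C * ‖x - w‖ ^ γ) (nhds w) (nhds 0) := by
      have h1 : Filter.Tendsto (fun x : E => ‖x - w‖) (nhds w) (nhds 0) := by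
        simpa using (Filter.tendsto_id (x := nhds w)).sub_const w |>.norm
      have h2 := (h1.rpow_const (Or.inr hγ0.le))
      rw [Real.zero_rpow hγ0.ne'] at h2
      simpa using h2.const_mul C
    exact squeeze_zero (fun x => norm_nonneg _) (fun x => hD x w) hlim
  -- The key quantitative remainder estimate, for all `w, h : E`
  have key : ∀ w h : E, ‖B (w + h) - B w - D w h‖ ≤ (C / (γ + 1)) * ‖h‖ ^ (1 + γ) := by
    -- first: it holds on `Λ × Λ`
    have hΛkey : ∀ w h : E, w ∈ Λ → h ∈ Λ →
        ‖B (w + h) - B w - D w h‖ ≤ (C / (γ + 1)) * ‖h‖ ^ (1 + γ) := by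
      intro w h hw hh
      have hcont : Continuous (fun θ : ℝ => D (w + θ • h) h) := by
        exact (hDcont.comp (by continuity)).clm_apply continuous_const
      have hint : IntervalIntegrable (fun θ : ℝ => D (w + θ • h) h) volume 0 1 :=
        hcont.intervalIntegrable 0 1
      have hid : B (w + h) - B w - D w h
          = ∫ θ in (0:ℝ)..1, (D (w + θ • h) h - D w h) := by
        rw [intervalIntegral.integral_sub hint (intervalIntegrable_const),
          intervalIntegral.integral_const]
        rw [hTaylor w h hw hh]
        simp
      rw [hid]
      have hbound : ∀ θ ∈ Set.Ioc (0:ℝ) 1,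
          ‖D (w + θ • h) h - D w h‖ ≤ C * θ ^ γ * ‖h‖ ^ (1 + γ) := by
        intro θ hθ
        have h1 : D (w + θ • h) h - D w h = (D (w + θ • h) - D w) h := by simp
        rw [h1]
        calc ‖(D (w + θ • h) - D w) h‖
            ≤ ‖D (w + θ • h) - D w‖ * ‖h‖ := (D (w + θ • h) - D w).le_opNorm h
          _ ≤ C * ‖(w + θ • h) - w‖ ^ γ * ‖h‖ := by
              gcongr; exact hD _ _
          _ = C * θ ^ γ * ‖h‖ ^ (1 + γ) := by
              have : ‖(w + θ • h) - w‖ = θ * ‖h‖ := by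
                simp [norm_smul, abs_of_pos hθ.1]
              rw [this, Real.mul_rpow hθ.1.le (norm_nonneg h),
                Real.rpow_add' (norm_nonneg h) (by positivity)]
              rw [Real.rpow_one]
              ring
      have hint' : IntervalIntegrable (fun θ : ℝ => C * θ ^ γ * ‖h‖ ^ (1 + γ)) volume 0 1 := by
        apply IntervalIntegrable.mul_const
        apply IntervalIntegrable.const_mul
        exact intervalIntegral.intervalIntegrable_rpow (Or.inl hγ0.le)
      have hval : (∫ θ in (0:ℝ)..1, C * θ ^ γ * ‖h‖ ^ (1 + γ))
          = (C / (γ + 1)) * ‖h‖ ^ (1 + γ) := by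
        rw [intervalIntegral.integral_mul_const, intervalIntegral.integral_const_mul,
          integral_rpow (Or.inl (by linarith))]
        rw [Real.one_rpow, Real.zero_rpow (by linarith)]
        ring
      have hnn : (0:ℝ) ≤ (C / (γ + 1)) * ‖h‖ ^ (1 + γ) := by positivity
      calc ‖∫ θ in (0:ℝ)..1, (D (w + θ • h) h - D w h)‖
          ≤ |∫ θ in (0:ℝ)..1, C * θ ^ γ * ‖h‖ ^ (1 + γ)| := by
            apply intervalIntegral.norm_integral_le_abs_of_norm_le _ hint'
            filter_upwards [MeasureTheory.ae_restrict_mem measurableSet_Ioc] with θ hθ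
            rw [Set.uIoc_of_le (by norm_num : (0:ℝ) ≤ 1)] at hθ
            exact hbound θ hθ
        _ = (C / (γ + 1)) * ‖h‖ ^ (1 + γ) := by rw [hval, abs_of_nonneg hnn]
    -- extend by density
    intro w h
    set S : Set (E × E) := {p : E × E |
      ‖B (p.1 + p.2) - B p.1 - D p.1 p.2‖ ≤ (C / (γ + 1)) * ‖p.2‖ ^ (1 + γ)} with hS
    have hclosed : IsClosed S := by
      apply isClosed_le
      · apply Continuous.norm
        apply Continuous.sub
        · exact (hB.comp (continuous_fst.add continuous_snd)).sub (hB.comp continuous_fst)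
        · exact (hDcont.comp continuous_fst).clm_apply continuous_snd
      · exact continuous_const.mul
          ((continuous_snd.norm).rpow_const (fun p => Or.inr (by linarith)))
    have hsub : ((Λ : Set E) ×ˢ (Λ : Set E)) ⊆ S := by
      rintro ⟨w, h⟩ ⟨hw, hh⟩
      exact hΛkey w h hw hh
    have hdense : Dense ((Λ : Set E) ×ˢ (Λ : Set E)) := hΛ.prod hΛ
    have hmem : (w, h) ∈ S := by
      have : closure ((Λ : Set E) ×ˢ (Λ : Set E)) ⊆ S := closure_minimal hsub hclosed
      exact this (by rw [hdense.closure_eq]; trivial)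
    exact hmem
  constructor
  · intro w
    rw [hasFDerivAt_iff_isLittleO_nhds_zero]
    rw [Asymptotics.isLittleO_iff]
    intro c hc
    have hlim : Filter.Tendsto (fun h : E => (C / (γ + 1)) * ‖h‖ ^ γ) (nhds 0) (nhds 0) := by
      have h1 : Filter.Tendsto (fun h : E => ‖h‖) (nhds 0) (nhds 0) := by
        simpa using continuous_norm.tendsto (0 : E)
      have h2 := h1.rpow_const (Or.inr hγ0.le)
      rw [Real.zero_rpow hγ0.ne'] at h2
      simpa using h2.const_mul (C / (γ + 1))
    filter_upwards [hlim.eventually_le_const hc] with h hh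
    calc ‖B (w + h) - B w - D w h‖ ≤ (C / (γ + 1)) * ‖h‖ ^ (1 + γ) := key w h
      _ = ((C / (γ + 1)) * ‖h‖ ^ γ) * ‖h‖ := by
          rw [Real.rpow_add' (norm_nonneg h) (by positivity), Real.rpow_one]; ring
      _ ≤ c * ‖h‖ := by gcongr
  · intro w₁ w₂
    have := key w₁ (w₂ - w₁)
    simpa using this
end
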